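/- arXiv:2406.02714 — 2 statements merged into one kernel-verified Lean document; each statement's English description precedes it below -/
import Mathlib

section
/- For a real Banach lattice E the following are equivalent: (1) E has the positive Schur property; (2) every LW-compact operator from E into an arbitrary Banach space is DW-compact; (3) every LW-compact operator T : E → ℓ^∞ is DW-compact. -/
open Filter Topology Metric Bornology ZeroAtInfty NormedSpace

/-- A sequence in a normed space is weakly null if it converges to zero in the weak topology,
i.e. `f (x n) → 0` for every continuous linear functional `f`. -/
def WeaklyNull {X : Type*} [NormedAddCommGroup X] [NormedSpace ℝ X] (x : ℕ → X) : Prop :=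
  ∀ f : X →L[ℝ] ℝ, Tendsto (fun n => f (x n)) atTop (𝓝 0)

/-- A sequence in a Banach lattice is disjoint if `|x m| ⊓ |x n| = 0` for `m ≠ n`. -/
def DisjointSeq {E : Type*} [NormedAddCommGroup E] [Lattice E] [IsOrderedAddMonoid E] [HasSolidNorm E] (x : ℕ → E) : Prop :=
  ∀ m n, m ≠ n → |x m| ⊓ |x n| = 0

/-- The solid hull of a set in a Banach lattice. -/
def SolidHull {E : Type*} [NormedAddCommGroup E] [Lattice E] [IsOrderedAddMonoid E] [HasSolidNorm E] (A : Set E) : Set E :=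
  {y | ∃ x ∈ A, |y| ≤ |x|}

/-- A norm bounded set `A` is disjointly weakly compact if every disjoint sequence in the
solid hull of `A` is weakly null. -/
def DisjointlyWeaklyCompact {E : Type*} [NormedAddCommGroup E] [Lattice E] [IsOrderedAddMonoid E] [HasSolidNorm E] [NormedSpace ℝ E]
    (A : Set E) : Prop :=
  IsBounded A ∧ ∀ x : ℕ → E, (∀ n, x n ∈ SolidHull A) → DisjointSeq x → WeaklyNull x

/-- An operator is DW-compact if it maps disjointly weakly compact sets onto relatively
norm compact sets. -/
def DWCompact {E X : Type*} [NormedAddCommGroup E] [Lattice E] [IsOrderedAddMonoid E] [HasSolidNorm E] [NormedSpace ℝ E]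
    [NormedAddCommGroup X] [NormedSpace ℝ X] (T : E →L[ℝ] X) : Prop :=
  ∀ A : Set E, DisjointlyWeaklyCompact A → IsCompact (closure (T '' A))

/-- A compact operator maps the closed unit ball onto a relatively norm compact set. -/
def CompactOp {X Y : Type*} [NormedAddCommGroup X] [NormedSpace ℝ X]
    [NormedAddCommGroup Y] [NormedSpace ℝ Y] (T : X →L[ℝ] Y) : Prop :=
  IsCompact (closure (T '' closedBall 0 1))

/-- A set is relatively weakly compact if its closure in the weak topology is compact. -/
def RelWeaklyCompact {X : Type*} [NormedAddCommGroup X] [NormedSpace ℝ X] (A : Set X) : Prop :=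
  IsCompact (closure (toWeakSpace ℝ X '' A))

/-- A weakly compact operator maps the closed unit ball onto a relatively weakly compact set. -/
def WeaklyCompactOp {X Y : Type*} [NormedAddCommGroup X] [NormedSpace ℝ X]
    [NormedAddCommGroup Y] [NormedSpace ℝ Y] (T : X →L[ℝ] Y) : Prop :=
  RelWeaklyCompact (T '' closedBall 0 1)

/-- A Dunford-Pettis operator sends weakly null sequences to norm null sequences. -/
def DunfordPettisOp {X Y : Type*} [NormedAddCommGroup X] [NormedSpace ℝ X]
    [NormedAddCommGroup Y] [NormedSpace ℝ Y] (T : X →L[ℝ] Y) : Prop :=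
  ∀ x : ℕ → X, WeaklyNull x → Tendsto (fun n => ‖T (x n)‖) atTop (𝓝 0)

/-- An almost Dunford-Pettis operator sends disjoint weakly null sequences to norm null
sequences. -/
def AlmostDunfordPettisOp {E X : Type*} [NormedAddCommGroup E] [Lattice E] [IsOrderedAddMonoid E] [HasSolidNorm E] [NormedSpace ℝ E]
    [NormedAddCommGroup X] [NormedSpace ℝ X] (T : E →L[ℝ] X) : Prop :=
  ∀ x : ℕ → E, DisjointSeq x → WeaklyNull x → Tendsto (fun n => ‖T (x n)‖) atTop (𝓝 0)

/-- An AM-compact operator maps order intervals `[-u, u]` onto relatively norm compact sets. -/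
def AMCompact {E X : Type*} [NormedAddCommGroup E] [Lattice E] [IsOrderedAddMonoid E] [HasSolidNorm E] [NormedSpace ℝ E]
    [NormedAddCommGroup X] [NormedSpace ℝ X] (T : E →L[ℝ] X) : Prop :=
  ∀ u : E, 0 ≤ u → IsCompact (closure (T '' Set.Icc (-u) u))

/-- A disjointly weakly compact operator maps the closed unit ball onto a disjointly weakly
compact set. -/
def DisjointlyWeaklyCompactOp {Y E : Type*} [NormedAddCommGroup Y] [NormedSpace ℝ Y]
    [NormedAddCommGroup E] [Lattice E] [IsOrderedAddMonoid E] [HasSolidNorm E] [NormedSpace ℝ E] (S : Y →L[ℝ] E) : Prop :=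
  DisjointlyWeaklyCompact (S '' closedBall 0 1)

/-- A norm bounded set `A` is L-weakly compact if every disjoint sequence in the solid hull
of `A` is norm null. -/
def LWeaklyCompactSet {E : Type*} [NormedAddCommGroup E] [Lattice E] [IsOrderedAddMonoid E] [HasSolidNorm E] [NormedSpace ℝ E]
    (A : Set E) : Prop :=
  IsBounded A ∧ ∀ x : ℕ → E, (∀ n, x n ∈ SolidHull A) → DisjointSeq x →
    Tendsto (fun n => ‖x n‖) atTop (𝓝 0)

/-- An LW-compact operator maps L-weakly compact sets onto relatively norm compact sets. -/
def LWCompact {E X : Type*} [NormedAddCommGroup E] [Lattice E] [IsOrderedAddMonoid E] [HasSolidNorm E] [NormedSpace ℝ E]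
    [NormedAddCommGroup X] [NormedSpace ℝ X] (T : E →L[ℝ] X) : Prop :=
  ∀ A : Set E, LWeaklyCompactSet A → IsCompact (closure (T '' A))

/-- Schur property: every weakly null sequence is norm null. -/
def SchurProp (X : Type*) [NormedAddCommGroup X] [NormedSpace ℝ X] : Prop :=
  ∀ x : ℕ → X, WeaklyNull x → Tendsto (fun n => ‖x n‖) atTop (𝓝 0)

/-- Positive Schur property: every disjoint weakly null sequence is norm null. -/
def PositiveSchurProp (E : Type*) [NormedAddCommGroup E] [Lattice E] [IsOrderedAddMonoid E] [HasSolidNorm E] [NormedSpace ℝ E] : Prop :=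
  ∀ x : ℕ → E, DisjointSeq x → WeaklyNull x → Tendsto (fun n => ‖x n‖) atTop (𝓝 0)

/-- A set is weakly precompact if every sequence in it admits a weakly Cauchy subsequence. -/
def WeaklyPrecompact {X : Type*} [NormedAddCommGroup X] [NormedSpace ℝ X] (A : Set X) : Prop :=
  ∀ x : ℕ → X, (∀ n, x n ∈ A) → ∃ φ : ℕ → ℕ, StrictMono φ ∧
    ∀ f : X →L[ℝ] ℝ, ∃ l : ℝ, Tendsto (fun n => f (x (φ n))) atTop (𝓝 l)

/-- `posDualAbs f x`, for `x ≥ 0`, is `|f|(x) = sup {f u : |u| ≤ x}` (Riesz–Kantorovich). -/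
noncomputable def posDualAbs {E : Type*} [NormedAddCommGroup E] [Lattice E] [IsOrderedAddMonoid E] [HasSolidNorm E] [NormedSpace ℝ E]
    (f : E →L[ℝ] ℝ) (x : E) : ℝ :=
  sSup (f '' {u : E | |u| ≤ x})

/-- `dualAbs f x = |f| x` is the modulus of the functional `f` evaluated at `x`. -/
noncomputable def dualAbs {E : Type*} [NormedAddCommGroup E] [Lattice E] [IsOrderedAddMonoid E] [HasSolidNorm E] [NormedSpace ℝ E]
    (f : E →L[ℝ] ℝ) (x : E) : ℝ :=
  posDualAbs f x⁺ - posDualAbs f x⁻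

/-- A set `A` is `|σ|(E,E′)`-totally bounded: for every `ε > 0` and finite family of
functionals there is a finite subset `Φ` of `A` with
`A ⊆ Φ + ⋂ᵢ {x : |fᵢ|(|x|) < ε}`. -/
def AbsWeakTotallyBounded {E : Type*} [NormedAddCommGroup E] [Lattice E] [IsOrderedAddMonoid E] [HasSolidNorm E] [NormedSpace ℝ E]
    (A : Set E) : Prop :=
  ∀ ε : ℝ, 0 < ε → ∀ S : Finset (E →L[ℝ] ℝ),
    ∃ Φ : Finset E, ↑Φ ⊆ A ∧ ∀ a ∈ A, ∃ y ∈ Φ, ∀ f ∈ S, posDualAbs f |a - y| < ε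

/-- The canonical order on the dual of a Banach lattice: `f ≤ g` iff `f x ≤ g x` for
all `x ≥ 0`. -/
def DualLe {E : Type*} [NormedAddCommGroup E] [Lattice E] [IsOrderedAddMonoid E] [HasSolidNorm E] [NormedSpace ℝ E]
    (f g : E →L[ℝ] ℝ) : Prop :=
  ∀ x : E, 0 ≤ x → f x ≤ g x

/-- The norm of the dual `E′` is order continuous: `‖f i‖ → 0` for every net `(f i)` in `E′`
decreasing to `0` (in the canonical dual order). -/
def DualOrderContinuousNorm (E : Type*) [NormedAddCommGroup E] [Lattice E] [IsOrderedAddMonoid E] [HasSolidNorm E] [NormedSpace ℝ E] :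
    Prop :=
  ∀ (ι : Type) (_ : Preorder ι), IsDirected ι (· ≤ ·) → Nonempty ι →
    ∀ f : ι → E →L[ℝ] ℝ,
      (∀ i j, i ≤ j → DualLe (f j) (f i)) →
      (∀ i, DualLe 0 (f i)) →
      (∀ g : E →L[ℝ] ℝ, (∀ i, DualLe g (f i)) → DualLe g 0) →
      Tendsto (fun i => ‖f i‖) atTop (𝓝 0)

/-- The norm of a Banach lattice is order continuous: `‖y i‖ → 0` for every net `(y i)`
decreasing to `0`. -/
def OrderContinuousNorm (E : Type*) [NormedAddCommGroup E] [Lattice E] [IsOrderedAddMonoid E] [HasSolidNorm E] : Prop :=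
  ∀ (ι : Type) (_ : Preorder ι), IsDirected ι (· ≤ ·) → Nonempty ι →
    ∀ y : ι → E, Antitone y → IsGLB (Set.range y) 0 →
      Tendsto (fun i => ‖y i‖) atTop (𝓝 0)

/-- An order bounded operator maps order intervals into order bounded sets. -/
def OrderBoundedOp {E F : Type*} [NormedAddCommGroup E] [Lattice E] [IsOrderedAddMonoid E] [HasSolidNorm E] [NormedSpace ℝ E]
    [NormedAddCommGroup F] [Lattice F] [IsOrderedAddMonoid F] [HasSolidNorm F] [NormedSpace ℝ F] (T : E →L[ℝ] F) : Prop :=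
  ∀ x : E, 0 ≤ x → ∃ y : F, ∀ u : E, |u| ≤ x → |T u| ≤ y

/-- A positive operator maps the positive cone into the positive cone. -/
def PositiveOp {E F : Type*} [NormedAddCommGroup E] [Lattice E] [IsOrderedAddMonoid E] [HasSolidNorm E] [NormedSpace ℝ E]
    [NormedAddCommGroup F] [Lattice F] [IsOrderedAddMonoid F] [HasSolidNorm F] [NormedSpace ℝ F] (T : E →L[ℝ] F) : Prop :=
  ∀ x : E, 0 ≤ x → 0 ≤ T x

/-- An order weakly compact operator maps order intervals `[0, u]` onto relatively weakly
compact sets. -/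
def OrderWeaklyCompactOp {F X : Type*} [NormedAddCommGroup F] [Lattice F] [IsOrderedAddMonoid F] [HasSolidNorm F] [NormedSpace ℝ F]
    [NormedAddCommGroup X] [NormedSpace ℝ X] (T : F →L[ℝ] X) : Prop :=
  ∀ u : F, 0 ≤ u → RelWeaklyCompact (T '' Set.Icc 0 u)

/-- A bounded set is limited if every weak*-null sequence of functionals converges to zero
uniformly on it. -/
def IsLimitedSet {X : Type*} [NormedAddCommGroup X] [NormedSpace ℝ X] (A : Set X) : Prop :=
  ∀ f : ℕ → X →L[ℝ] ℝ, (∀ x : X, Tendsto (fun n => f n x) atTop (𝓝 0)) →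
    TendstoUniformlyOn (fun n x => f n x) 0 atTop A

/-- A bounded set is a Dunford-Pettis set if every weakly null sequence of functionals
converges to zero uniformly on it. -/
def IsDPSet {X : Type*} [NormedAddCommGroup X] [NormedSpace ℝ X] (A : Set X) : Prop :=
  ∀ f : ℕ → X →L[ℝ] ℝ, WeaklyNull f → TendstoUniformlyOn (fun n x => f n x) 0 atTop A

/-- A Banach lattice has the (d)-DP* property if every disjointly weakly compact set is
limited. -/
def dDPstarProp (E : Type*) [NormedAddCommGroup E] [Lattice E] [IsOrderedAddMonoid E] [HasSolidNorm E] [NormedSpace ℝ E] : Prop :=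
  ∀ A : Set E, DisjointlyWeaklyCompact A → IsLimitedSet A

/-- A Banach lattice has the (d)-DP property if every disjointly weakly compact set is a
Dunford-Pettis set. -/
def dDPProp (E : Type*) [NormedAddCommGroup E] [Lattice E] [IsOrderedAddMonoid E] [HasSolidNorm E] [NormedSpace ℝ E] : Prop :=
  ∀ A : Set E, DisjointlyWeaklyCompact A → IsDPSet A

/-- A Banach space has the Dunford-Pettis property if every relatively weakly compact set
is a Dunford-Pettis set. -/
def DunfordPettisProp (X : Type*) [NormedAddCommGroup X] [NormedSpace ℝ X] : Prop :=
  ∀ A : Set X, RelWeaklyCompact A → IsDPSet A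

/-- A Banach space is a Gelfand-Phillips space if every (bounded) limited set is relatively
norm compact. -/
def GelfandPhillips (X : Type*) [NormedAddCommGroup X] [NormedSpace ℝ X] : Prop :=
  ∀ A : Set X, IsBounded A → IsLimitedSet A → IsCompact (closure A)

/-- A sequence of functionals is an L-sequence if `{f n}` is an L-set: it converges to zero
uniformly (in `n`) along every weakly null sequence of the space. -/
def IsLSequence {X : Type*} [NormedAddCommGroup X] [NormedSpace ℝ X]
    (f : ℕ → X →L[ℝ] ℝ) : Prop :=
  ∀ x : ℕ → X, WeaklyNull x →
    ∀ ε : ℝ, 0 < ε → ∃ M : ℕ, ∀ m ≥ M, ∀ n : ℕ, |f n (x m)| < ε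

/-- σ-Dedekind complete: every nonempty countable order bounded set has a supremum. -/
def SigmaDedekindComplete (E : Type*) [NormedAddCommGroup E] [Lattice E] [IsOrderedAddMonoid E] [HasSolidNorm E] : Prop :=
  ∀ A : Set E, A.Countable → A.Nonempty → BddBelow A → BddAbove A → ∃ s, IsLUB A s

/-- KB-space: every increasing norm bounded sequence in the positive cone is norm
convergent. -/
def KBSpace (E : Type*) [NormedAddCommGroup E] [Lattice E] [IsOrderedAddMonoid E] [HasSolidNorm E] : Prop :=
  ∀ x : ℕ → E, (∀ n, 0 ≤ x n) → Monotone x → (∃ C : ℝ, ∀ n, ‖x n‖ ≤ C) →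
    ∃ y : E, Tendsto x atTop (𝓝 y)





section LatticeLemmas
variable {E : Type*} [NormedAddCommGroup E] [Lattice E] [IsOrderedAddMonoid E] [HasSolidNorm E]

lemma pp_le_abs (a : E) : a⁺ ≤ |a| := by
  rw [← posPart_add_negPart a]; exact le_add_of_nonneg_right (negPart_nonneg a)

lemma np_le_abs (a : E) : a⁻ ≤ |a| := by
  rw [← posPart_add_negPart a]; exact le_add_of_nonneg_left (posPart_nonneg a)

lemma inf_add_le' {a b c : E} (ha : 0 ≤ a) (hb : 0 ≤ b) (hc : 0 ≤ c) :
    (a + b) ⊓ c ≤ a ⊓ c + b ⊓ c := by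
  have h1 : a ⊓ c + b ⊓ c = ((a + b) ⊓ (c + b)) ⊓ ((a + c) ⊓ (c + c)) := by
    rw [add_inf, inf_add, inf_add]
  rw [h1]
  exact le_inf (le_inf inf_le_left (inf_le_right.trans (le_add_of_nonneg_right hb)))
    (le_inf (inf_le_right.trans (le_add_of_nonneg_left ha))
      (inf_le_right.trans (le_add_of_nonneg_right hc)))

lemma disjoint_nsmul_right {a b : E} (ha : 0 ≤ a) (hb : 0 ≤ b) (hab : a ⊓ b = 0)
    (n : ℕ) : a ⊓ (n • b) = 0 := by
  induction n with
  | zero => simpa using ha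
  | succ k ih =>
    have h0 : 0 ≤ a ⊓ ((k + 1) • b) := le_inf ha (nsmul_nonneg hb _)
    have h2 : a ⊓ ((k + 1) • b) ≤ a ⊓ (k • b) + a ⊓ b := by
      rw [succ_nsmul, inf_comm]
      exact (inf_add_le' (nsmul_nonneg hb _) hb ha).trans
        (add_le_add (by rw [inf_comm]) (by rw [inf_comm]))
    exact le_antisymm (by simpa [ih, hab] using h2) h0

lemma abs_sub_of_disjoint' {p q : E} (hp : 0 ≤ p) (hq : 0 ≤ q) (hpq : p ⊓ q = 0) :
    |p - q| = p + q := by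
  have hsup : p ⊔ q = p + q := by
    have := inf_add_sup p q
    rw [hpq, zero_add] at this; exact this
  have hpos : (p - q)⁺ = p := by
    rw [posPart_def, ← sub_self q, ← sup_sub, hsup]
    abel
  have hneg : (p - q)⁻ = q := by
    rw [negPart_def, neg_sub, ← sub_self p, ← sup_sub]
    rw [sup_comm, hsup]
    abel
  rw [← posPart_add_negPart (p - q), hpos, hneg]

lemma abs_add_of_disjoint {a b : E} (hab : |a| ⊓ |b| = 0) : |a + b| = |a| + |b| := by
  have hpq : (a⁺ + b⁺) ⊓ (a⁻ + b⁻) = 0 := by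
    have h0 : (0:E) ≤ (a⁺ + b⁺) ⊓ (a⁻ + b⁻) :=
      le_inf (add_nonneg (posPart_nonneg a) (posPart_nonneg b))
        (add_nonneg (negPart_nonneg a) (negPart_nonneg b))
    have h1 : (a⁺ + b⁺) ⊓ (a⁻ + b⁻) ≤
        (a⁺ ⊓ a⁻ + a⁺ ⊓ b⁻) + (b⁺ ⊓ a⁻ + b⁺ ⊓ b⁻) := by
      refine (inf_add_le' (posPart_nonneg a) (posPart_nonneg b)
        (add_nonneg (negPart_nonneg a) (negPart_nonneg b))).trans (add_le_add ?_ ?_)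
      · rw [inf_comm]
        exact (inf_add_le' (negPart_nonneg a) (negPart_nonneg b) (posPart_nonneg a)).trans
          (add_le_add (by rw [inf_comm]) (by rw [inf_comm]))
      · rw [inf_comm]
        exact (inf_add_le' (negPart_nonneg a) (negPart_nonneg b) (posPart_nonneg b)).trans
          (add_le_add (by rw [inf_comm]) (by rw [inf_comm]))
    have e1 : a⁺ ⊓ a⁻ = 0 := posPart_inf_negPart_eq_zero a
    have e2 : b⁺ ⊓ b⁻ = 0 := posPart_inf_negPart_eq_zero b
    have e3 : a⁺ ⊓ b⁻ = 0 := le_antisymm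
      (le_of_le_of_eq (inf_le_inf (pp_le_abs a) (np_le_abs b)) hab)
      (le_inf (posPart_nonneg a) (negPart_nonneg b))
    have e4 : b⁺ ⊓ a⁻ = 0 := le_antisymm
      (le_of_le_of_eq (inf_le_inf (pp_le_abs b) (np_le_abs a)) (by rw [inf_comm]; exact hab))
      (le_inf (posPart_nonneg b) (negPart_nonneg a))
    exact le_antisymm (by simpa [e1, e2, e3, e4] using h1) h0
  have hab' : a + b = (a⁺ + b⁺) - (a⁻ + b⁻) := by
    rw [add_sub_add_comm, posPart_sub_negPart, posPart_sub_negPart]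
  rw [hab', abs_sub_of_disjoint'
    (add_nonneg (posPart_nonneg a) (posPart_nonneg b))
    (add_nonneg (negPart_nonneg a) (negPart_nonneg b)) hpq,
    ← posPart_add_negPart a, ← posPart_add_negPart b]
  abel

end LatticeLemmas

section SmulOrder
variable {E : Type*} [NormedAddCommGroup E] [Lattice E] [IsOrderedAddMonoid E] [HasSolidNorm E] [NormedSpace ℝ E]

lemma nonneg_of_nsmul_nonneg {z : E} {n : ℕ} (hn : 1 ≤ n) (h : 0 ≤ n • z) : 0 ≤ z := by
  have hd : (n • z⁺) ⊓ (n • z⁻) = 0 := by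
    have h1 : z⁺ ⊓ (n • z⁻) = 0 :=
      disjoint_nsmul_right (posPart_nonneg z) (negPart_nonneg z)
        (posPart_inf_negPart_eq_zero z) n
    have h2 : (n • z⁻) ⊓ z⁺ = 0 := by rw [inf_comm]; exact h1
    rw [inf_comm]
    exact disjoint_nsmul_right (nsmul_nonneg (negPart_nonneg z) n) (posPart_nonneg z) h2 n
  have hz : n • z = n • z⁺ - n • z⁻ := by rw [← smul_sub, posPart_sub_negPart]
  have hle : n • z⁻ ≤ n • z⁺ := by rw [hz, sub_nonneg] at h; exact h
  have h0 : n • z⁻ = 0 := by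
    have h3 : n • z⁻ = (n • z⁺) ⊓ (n • z⁻) := (inf_eq_right.mpr hle).symm
    rw [h3, hd]
  have h4 : z⁻ ≤ n • z⁻ := by
    calc z⁻ = 1 • z⁻ := (one_nsmul _).symm
      _ ≤ n • z⁻ := nsmul_le_nsmul_left (negPart_nonneg z) hn
  have hzneg : z⁻ = 0 := le_antisymm (h0 ▸ h4) (negPart_nonneg z)
  have h5 := posPart_sub_negPart z
  rw [hzneg, sub_zero] at h5
  rw [← h5]; exact posPart_nonneg z

lemma rat_smul_nonneg {x : E} (hx : 0 ≤ x) (q : ℚ) (hq : 0 ≤ q) : 0 ≤ (q : ℝ) • x := by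
  have hden : q.den • ((q : ℝ) • x) = ((q.num : ℝ)) • x := by
    rw [← Nat.cast_smul_eq_nsmul ℝ, smul_smul, ← Rat.cast_natCast, ← Rat.cast_mul,
      Rat.den_mul_eq_num, Rat.cast_intCast]
  have hnum : 0 ≤ ((q.num : ℝ)) • x := by
    have h1 : ((q.num : ℝ)) • x = q.num.toNat • x := by
      rw [← Nat.cast_smul_eq_nsmul ℝ]
      congr 1
      exact_mod_cast (Int.toNat_of_nonneg (Rat.num_nonneg.mpr hq)).symm
    rw [h1]
    exact nsmul_nonneg hx _
  exact nonneg_of_nsmul_nonneg q.pos (hden ▸ hnum)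

lemma rsmul_nonneg {x : E} {c : ℝ} (hc : 0 ≤ c) (hx : 0 ≤ x) : 0 ≤ c • x := by
  have hex := fun n : ℕ => exists_rat_btwn (lt_add_of_pos_right c
    (by positivity : (0:ℝ) < 1 / (n + 1)))
  choose q hq1 hq2 using hex
  have h1 : Tendsto (fun n : ℕ => ((q n : ℚ) : ℝ)) atTop (𝓝 c) := by
    have hub : Tendsto (fun n : ℕ => c + 1 / (n + 1 : ℝ)) atTop (𝓝 c) := by
      have h := tendsto_one_div_add_atTop_nhds_zero_nat (𝕜 := ℝ)
      simpa using tendsto_const_nhds.add h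
    exact tendsto_of_tendsto_of_tendsto_of_le_of_le tendsto_const_nhds hub
      (fun n => (hq1 n).le) (fun n => (hq2 n).le)
  have h2 : Tendsto (fun n : ℕ => ((q n : ℚ) : ℝ) • x) atTop (𝓝 (c • x)) :=
    h1.smul_const x
  refine isClosed_nonneg.mem_of_tendsto h2 (Filter.Eventually.of_forall fun n => ?_)
  exact rat_smul_nonneg hx (q n) (by exact_mod_cast (hc.trans_lt (hq1 n)).le)

lemma rsmul_mono {a b : E} {c : ℝ} (hc : 0 ≤ c) (hab : a ≤ b) : c • a ≤ c • b := by
  have h := rsmul_nonneg hc (sub_nonneg.mpr hab)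
  rw [smul_sub, sub_nonneg] at h; exact h

lemma rsmul_inf {a b : E} {c : ℝ} (hc : 0 < c) : c • (a ⊓ b) = (c • a) ⊓ (c • b) := by
  refine le_antisymm (le_inf (rsmul_mono hc.le inf_le_left) (rsmul_mono hc.le inf_le_right)) ?_
  have h := le_inf (rsmul_mono (inv_nonneg.mpr hc.le) (inf_le_left (a := c • a) (b := c • b)))
    (rsmul_mono (inv_nonneg.mpr hc.le) (inf_le_right (a := c • a) (b := c • b)))
  rw [smul_smul, smul_smul, inv_mul_cancel₀ hc.ne', one_smul, one_smul] at h
  have h2 := rsmul_mono hc.le h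
  rwa [smul_smul, mul_inv_cancel₀ hc.ne', one_smul] at h2

lemma rsmul_sup {a b : E} {c : ℝ} (hc : 0 < c) : c • (a ⊔ b) = (c • a) ⊔ (c • b) := by
  have h1 := inf_add_sup a b
  have h2 := inf_add_sup (c • a) (c • b)
  have h3 : c • (a ⊔ b) = c • a + c • b - c • (a ⊓ b) := by
    rw [← smul_add, ← h1, smul_add]; abel
  rw [h3, rsmul_inf hc, ← h2]; abel

lemma posPart_rsmul {x : E} {c : ℝ} (hc : 0 ≤ c) : (c • x)⁺ = c • x⁺ := by
  rcases eq_or_lt_of_le hc with h | h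
  · simp [← h]
  · rw [posPart_def, posPart_def, rsmul_sup h, smul_zero]

lemma abs_rsmul_eq {x : E} {c : ℝ} (hc : 0 ≤ c) : |c • x| = c • |x| := by
  rcases eq_or_lt_of_le hc with h | h
  · simp [← h]
  · have hd : (c • x⁺) ⊓ (c • x⁻) = 0 := by
      rw [← rsmul_inf h, posPart_inf_negPart_eq_zero, smul_zero]
    have hx : c • x = c • x⁺ - c • x⁻ := by rw [← smul_sub, posPart_sub_negPart]
    rw [hx, abs_sub_of_disjoint' (rsmul_nonneg hc (posPart_nonneg x))
      (rsmul_nonneg hc (negPart_nonneg x)) hd, ← smul_add, posPart_add_negPart]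

lemma abs_rsmul_eq' (x : E) (c : ℝ) : |c • x| = |c| • |x| := by
  rcases le_or_gt 0 c with h | h
  · rw [abs_rsmul_eq h, abs_of_nonneg h]
  · have h2 : c • x = -(|c| • x) := by
      rw [← neg_smul, abs_of_neg h, neg_neg]
    rw [h2, abs_neg, abs_rsmul_eq (abs_nonneg c)]

lemma disjoint_rsmul_right {a b : E} (ha : 0 ≤ a) (hb : 0 ≤ b) (hab : a ⊓ b = 0)
    {c : ℝ} (hc : 0 ≤ c) : a ⊓ (c • b) = 0 := by
  have h1 : c • b ≤ ⌈c⌉₊ • b := by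
    have h2 : (0:E) ≤ ((⌈c⌉₊ : ℝ) - c) • b := rsmul_nonneg (sub_nonneg.mpr (Nat.le_ceil c)) hb
    rw [sub_smul, sub_nonneg, Nat.cast_smul_eq_nsmul] at h2; exact h2
  refine le_antisymm ?_ (le_inf ha (rsmul_nonneg hc hb))
  calc a ⊓ (c • b) ≤ a ⊓ (⌈c⌉₊ • b) := inf_le_inf_left a h1
    _ = 0 := disjoint_nsmul_right ha hb hab _

end SmulOrder

section FinsetLemmas
variable {E : Type*} [NormedAddCommGroup E] [Lattice E] [IsOrderedAddMonoid E] [HasSolidNorm E] [NormedSpace ℝ E]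

omit [NormedSpace ℝ E] in
lemma finset_abs_sum_le {ι : Type*} (F : Finset ι) (g : ι → E) :
    |∑ i ∈ F, g i| ≤ ∑ i ∈ F, |g i| := by
  classical
  induction F using Finset.cons_induction with
  | empty => simp
  | cons a F ha ih =>
    rw [Finset.sum_cons, Finset.sum_cons]
    exact (abs_add_le _ _).trans (add_le_add_right ih _)

omit [NormedSpace ℝ E] in
lemma disjoint_inf_finsetSum {ι : Type*} (F : Finset ι) (b : ι → E) {c : E} (hc : 0 ≤ c)
    (hb : ∀ i ∈ F, 0 ≤ b i) (h : ∀ i ∈ F, c ⊓ b i = 0) : c ⊓ ∑ i ∈ F, b i = 0 := by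
  classical
  induction F using Finset.cons_induction with
  | empty => simpa using hc
  | cons a F ha ih =>
    rw [Finset.sum_cons]
    have hsum : (0:E) ≤ ∑ i ∈ F, b i := Finset.sum_nonneg fun i hi => hb i (Finset.mem_cons_of_mem hi)
    have h0 : 0 ≤ c ⊓ (b a + ∑ i ∈ F, b i) :=
      le_inf hc (add_nonneg (hb a (Finset.mem_cons_self a F)) hsum)
    refine le_antisymm ?_ h0
    have h1 : c ⊓ (b a + ∑ i ∈ F, b i) ≤ c ⊓ b a + c ⊓ ∑ i ∈ F, b i := by
      rw [inf_comm, inf_comm c (b a), inf_comm c (∑ i ∈ F, b i)]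
      exact inf_add_le' (hb a (Finset.mem_cons_self a F)) hsum hc
    calc c ⊓ (b a + ∑ i ∈ F, b i) ≤ c ⊓ b a + c ⊓ ∑ i ∈ F, b i := h1
      _ = 0 := by
        rw [h a (Finset.mem_cons_self a F),
          ih (fun i hi => hb i (Finset.mem_cons_of_mem hi))
            (fun i hi => h i (Finset.mem_cons_of_mem hi)), add_zero]

omit [NormedSpace ℝ E] in
lemma abs_finsetSum_of_disjoint {ι : Type*} (F : Finset ι) (g : ι → E)
    (hdisj : ∀ i ∈ F, ∀ j ∈ F, i ≠ j → |g i| ⊓ |g j| = 0) :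
    |∑ i ∈ F, g i| = ∑ i ∈ F, |g i| := by
  classical
  induction F using Finset.cons_induction with
  | empty => simp
  | cons a F ha ih =>
    rw [Finset.sum_cons, Finset.sum_cons, ← ih (fun i hi j hj hij =>
      hdisj i (Finset.mem_cons_of_mem hi) j (Finset.mem_cons_of_mem hj) hij)]
    refine abs_add_of_disjoint ?_
    rw [ih (fun i hi j hj hij =>
      hdisj i (Finset.mem_cons_of_mem hi) j (Finset.mem_cons_of_mem hj) hij)]
    exact disjoint_inf_finsetSum F (fun i => |g i|) (abs_nonneg _)
      (fun i _ => abs_nonneg _)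
      (fun i hi => hdisj a (Finset.mem_cons_self a F) i (Finset.mem_cons_of_mem hi)
        (fun hcon => ha (hcon ▸ hi)))

omit [NormedSpace ℝ E] in
lemma finsetSum_abs_le_of_disjoint {ι : Type*} (F : Finset ι) (g : ι → E) {u : E}
    (hu : 0 ≤ u)
    (hdisj : ∀ i ∈ F, ∀ j ∈ F, i ≠ j → |g i| ⊓ |g j| = 0)
    (hle : ∀ i ∈ F, |g i| ≤ u) : ∑ i ∈ F, |g i| ≤ u := by
  classical
  induction F using Finset.cons_induction with
  | empty => simpa using hu
  | cons a F ha ih =>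
    rw [Finset.sum_cons]
    have hsum : ∑ i ∈ F, |g i| ≤ u := ih
      (fun i hi j hj hij => hdisj i (Finset.mem_cons_of_mem hi) j
        (Finset.mem_cons_of_mem hj) hij)
      (fun i hi => hle i (Finset.mem_cons_of_mem hi))
    have hd : |g a| ⊓ ∑ i ∈ F, |g i| = 0 :=
      disjoint_inf_finsetSum F (fun i => |g i|) (abs_nonneg _) (fun i _ => abs_nonneg _)
        (fun i hi => hdisj a (Finset.mem_cons_self a F) i (Finset.mem_cons_of_mem hi)
          (fun hcon => ha (hcon ▸ hi)))
    have heq : |g a| + ∑ i ∈ F, |g i| = |g a| ⊔ ∑ i ∈ F, |g i| := by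
      have h2 := inf_add_sup (|g a|) (∑ i ∈ F, |g i|)
      rw [hd, zero_add] at h2; exact h2.symm
    rw [heq]
    exact sup_le (hle a (Finset.mem_cons_self a F)) hsum

end FinsetLemmas

section Mazur
variable {E : Type*} [NormedAddCommGroup E] [Lattice E] [IsOrderedAddMonoid E] [HasSolidNorm E] [NormedSpace ℝ E]

lemma zero_mem_closure_convexHull {w : ℕ → E} (hw : WeaklyNull w) :
    (0:E) ∈ closure (convexHull ℝ (Set.range w)) := by
  by_contra h
  obtain ⟨f, u, hfs, hux⟩ := geometric_hahn_banach_closed_point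
    ((convex_convexHull ℝ _).closure) isClosed_closure h
  have h1 : u < 0 := by simpa using hux
  have h2 : ∀ n, f (w n) < u := fun n =>
    hfs _ (subset_closure (subset_convexHull ℝ _ ⟨n, rfl⟩))
  have h3 := (hw f).eventually (eventually_gt_nhds h1)
  obtain ⟨n, hn⟩ := h3.exists
  exact absurd (h2 n) (not_lt.mpr hn.le)

lemma mazur_small {w : ℕ → E} (hw : WeaklyNull w) {δ : ℝ} (hδ : 0 < δ) :
    ∃ (F : Finset ℕ) (μ : ℕ → ℝ), (∀ k ∈ F, 0 ≤ μ k) ∧ (∑ k ∈ F, μ k = 1) ∧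
      ‖∑ k ∈ F, μ k • w k‖ < δ := by
  classical
  obtain ⟨c, hc, hcd⟩ := Metric.mem_closure_iff.mp (zero_mem_closure_convexHull hw) δ hδ
  rw [convexHull_eq] at hc
  obtain ⟨ι, t, wgt, z, hwgt, hsum, hz, hcm⟩ := hc
  have hdist : ‖c‖ < δ := by rwa [dist_comm, dist_zero_right] at hcd
  set g : ι → ℕ := fun i => if h : ∃ k, w k = z i then h.choose else 0 with hg
  have hgz : ∀ i ∈ t, w (g i) = z i := by
    intro i hi
    obtain ⟨k, hk⟩ := hz i hi
    simp only [hg]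
    rw [dif_pos ⟨k, hk⟩]
    exact (⟨k, hk⟩ : ∃ k, w k = z i).choose_spec
  refine ⟨t.image g, fun k => ∑ i ∈ t.filter (fun i => g i = k), wgt i, ?_, ?_, ?_⟩
  · intro k _
    exact Finset.sum_nonneg fun i hi => hwgt i (Finset.mem_filter.mp hi).1
  · rw [Finset.sum_fiberwise_of_maps_to (fun i hi => Finset.mem_image_of_mem g hi) wgt]
    exact hsum
  · have hvec : ∑ k ∈ t.image g, (∑ i ∈ t.filter (fun i => g i = k), wgt i) • w k = c := by
      have h1 : ∀ k ∈ t.image g,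
          (∑ i ∈ t.filter (fun i => g i = k), wgt i) • w k
            = ∑ i ∈ t.filter (fun i => g i = k), wgt i • z i := by
        intro k hk
        rw [Finset.sum_smul]
        refine Finset.sum_congr rfl fun i hi => ?_
        obtain ⟨hit, hgi⟩ := Finset.mem_filter.mp hi
        rw [← hgi, hgz i hit]
      rw [Finset.sum_congr rfl h1,
        Finset.sum_fiberwise_of_maps_to (fun i hi => Finset.mem_image_of_mem g hi)]
      rw [← hcm, Finset.centerMass_eq_of_sum_1 _ _ hsum]
    rwa [hvec]

end Mazur

section DWLemma
variable {E : Type*} [NormedAddCommGroup E] [Lattice E] [IsOrderedAddMonoid E] [HasSolidNorm E] [NormedSpace ℝ E]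

lemma weaklyNull_norm_bounded {x : ℕ → E} (hw : WeaklyNull x) : ∃ C, ∀ n, ‖x n‖ ≤ C := by
  have hpt : ∀ f : E →L[ℝ] ℝ, ∃ C, ∀ n,
      ‖(NormedSpace.inclusionInDoubleDual ℝ E (x n)) f‖ ≤ C := by
    intro f
    have h1 : Tendsto (fun n => ‖f (x n)‖) atTop (𝓝 ‖(0:ℝ)‖) := (hw f).norm
    obtain ⟨C, hC⟩ := h1.bddAbove_range
    exact ⟨C, fun n => hC ⟨n, rfl⟩⟩
  obtain ⟨C', hC'⟩ := banach_steinhaus hpt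
  refine ⟨C', fun n => ?_⟩
  have h2 : ‖NormedSpace.inclusionInDoubleDual ℝ E (x n)‖ = ‖x n‖ :=
    (NormedSpace.inclusionInDoubleDualLi ℝ (E := E)).norm_map (x n)
  rw [← h2]
  exact hC' n

lemma dwc_of_disjoint_weaklyNull {x : ℕ → E} (hd : DisjointSeq x) (hw : WeaklyNull x) :
    DisjointlyWeaklyCompact (Set.range x) := by
  classical
  obtain ⟨C, hC⟩ := weaklyNull_norm_bounded hw
  refine ⟨isBounded_iff_forall_norm_le.mpr ⟨C, by rintro _ ⟨n, rfl⟩; exact hC n⟩, ?_⟩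
  intro z hz hdz f
  have hσ : ∀ n, ∃ k, |z n| ≤ |x k| := fun n => by
    obtain ⟨a, ⟨k, rfl⟩, h⟩ := hz n; exact ⟨k, h⟩
  choose σ hσle using hσ
  by_contra hcon
  have hfreq : ∃ ε > 0, ∀ N, ∃ n ≥ N, ε ≤ |f (z n)| := by
    rw [Metric.tendsto_atTop] at hcon; push_neg at hcon
    obtain ⟨ε, hε, hN⟩ := hcon
    exact ⟨ε, hε, fun N => by
      obtain ⟨n, hn, h⟩ := hN N
      exact ⟨n, hn, by rwa [Real.dist_eq, sub_zero] at h⟩⟩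
  obtain ⟨ε, hε, hfr⟩ := hfreq
  obtain ⟨ψ, hψmono, hψ⟩ := Filter.extraction_of_frequently_atTop
    (Filter.frequently_atTop.mpr hfr)
  set τ : ℕ → ℕ := fun j => σ (ψ j) with hτ
  by_cases hcase : ∃ k, {j | τ j = k}.Infinite
  · -- Case 1: infinitely many dominated by a single x k
    obtain ⟨k, hk⟩ := hcase
    set e := Nat.nth (fun j => τ j = k) with he
    have hemono : StrictMono e := Nat.nth_strictMono hk
    have hek : ∀ i, τ (e i) = k := fun i => Nat.nth_mem_of_infinite hk i
    set w : ℕ → E := fun i => z (ψ (e i)) with hwdef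
    have hwd : ∀ i j, i ≠ j → |w i| ⊓ |w j| = 0 := fun i j hij =>
      hdz _ _ (fun hcon2 => hij ((hψmono.comp hemono).injective hcon2))
    have hwle : ∀ i, |w i| ≤ |x k| := fun i => by
      have := hσle (ψ (e i))
      rwa [show σ (ψ (e i)) = k from hek i] at this
    have hwf : ∀ i, ε ≤ |f (w i)| := fun i => hψ (e i)
    obtain ⟨m, hm⟩ := exists_nat_gt ((‖f‖ * ‖x k‖) / ε)
    set w' : ℕ → E := fun i => if 0 ≤ f (w i) then w i else -w i with hw'def
    have habs : ∀ i, |w' i| = |w i| := fun i => by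
      by_cases h : 0 ≤ f (w i) <;> simp [hw'def, h, abs_neg]
    have hfw' : ∀ i, f (w' i) = |f (w i)| := fun i => by
      by_cases h : 0 ≤ f (w i)
      · simp [hw'def, h, abs_of_nonneg h]
      · simp [hw'def, h, abs_of_neg (lt_of_not_ge h)]
    set S := ∑ i ∈ Finset.range m, w' i with hSdef
    have hfS : (m : ℝ) * ε ≤ f S := by
      rw [hSdef, map_sum]
      calc (m : ℝ) * ε = ∑ _i ∈ Finset.range m, ε := by
            rw [Finset.sum_const, Finset.card_range, nsmul_eq_mul]
        _ ≤ ∑ i ∈ Finset.range m, f (w' i) :=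
            Finset.sum_le_sum fun i _ => (hwf i).trans (hfw' i).ge
    have hSnorm : ‖S‖ ≤ ‖x k‖ := by
      have h1 : |S| ≤ |x k| := by
        refine (finset_abs_sum_le (Finset.range m) w').trans ?_
        refine finsetSum_abs_le_of_disjoint (Finset.range m) w' (abs_nonneg (x k)) ?_ ?_
        · intro i _ j _ hij
          rw [habs i, habs j]; exact hwd i j hij
        · intro i _
          rw [habs i]; exact hwle i
      have h2 : |S| ≤ |(|x k|)| := by rwa [abs_abs]
      calc ‖S‖ ≤ ‖(|x k|)‖ := HasSolidNorm.solid h2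
        _ = ‖x k‖ := norm_abs_eq_norm (x k)
    have hup : f S ≤ ‖f‖ * ‖x k‖ := by
      calc f S ≤ |f S| := le_abs_self _
        _ = ‖f S‖ := rfl
        _ ≤ ‖f‖ * ‖S‖ := f.le_opNorm S
        _ ≤ ‖f‖ * ‖x k‖ := mul_le_mul_of_nonneg_left hSnorm (norm_nonneg f)
    have : (m : ℝ) * ε ≤ ‖f‖ * ‖x k‖ := hfS.trans hup
    have hcontra : ‖f‖ * ‖x k‖ < (m : ℝ) * ε := by
      rw [div_lt_iff₀ hε] at hm
      linarith
    linarith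
  · -- Case 2: indices escape to infinity
    push_neg at hcase
    have htendc : Tendsto τ cofinite atTop := by
      refine Filter.tendsto_atTop.mpr fun b => ?_
      rw [Filter.eventually_cofinite]
      have hsub : {j | ¬ b ≤ τ j} ⊆ ⋃ k ∈ Finset.range b, {j | τ j = k} := by
        intro j hj
        simp only [Set.mem_setOf_eq, not_le] at hj
        exact Set.mem_biUnion (Finset.mem_range.mpr hj) rfl
      exact (Set.Finite.biUnion (Finset.range b).finite_toSet fun k _ => hcase k).subset hsub
    have htend : Tendsto τ atTop atTop := by rwa [Nat.cofinite_eq_atTop] at htendc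
    have hstep : ∀ a : ℕ, ∃ j, a < j ∧ τ a < τ j := by
      intro a
      obtain ⟨N, hN⟩ := Filter.eventually_atTop.mp (htend.eventually_gt_atTop (τ a))
      exact ⟨max (a + 1) N, lt_of_lt_of_le (Nat.lt_succ_self a) (le_max_left _ _),
        hN _ (le_max_right _ _)⟩
    choose nxt hnxt1 hnxt2 using hstep
    set ρ : ℕ → ℕ := fun n => Nat.rec 0 (fun _ prev => nxt prev) n with hρdef
    have hρsucc : ∀ n, ρ (n + 1) = nxt (ρ n) := fun n => rfl
    have hρs : StrictMono ρ := strictMono_nat_of_lt_succ fun n => by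
      rw [hρsucc]; exact hnxt1 (ρ n)
    set κ : ℕ → ℕ := fun i => τ (ρ i) with hκdef
    have hκs : StrictMono κ := strictMono_nat_of_lt_succ fun n => by
      show τ (ρ n) < τ (ρ (n + 1))
      rw [hρsucc]; exact hnxt2 (ρ n)
    set w : ℕ → E := fun i => z (ψ (ρ i)) with hwdef
    have hwd : ∀ i j, i ≠ j → |w i| ⊓ |w j| = 0 := fun i j hij =>
      hdz _ _ (fun hcon2 => hij ((hψmono.comp hρs).injective hcon2))
    have hwle : ∀ i, |w i| ≤ |x (κ i)| := fun i => hσle (ψ (ρ i))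
    have hwf : ∀ i, ε ≤ |f (w i)| := fun i => hψ (ρ i)
    have hwkn : WeaklyNull (fun i => x (κ i)) := fun g => (hw g).comp hκs.tendsto_atTop
    have hδ' : 0 < ε / (‖f‖ + 1) := by positivity
    obtain ⟨F, μ, hμ0, hμ1, hsmall⟩ := mazur_small hwkn hδ'
    set w' : ℕ → E := fun i => if 0 ≤ f (w i) then w i else -w i with hw'def
    have habs : ∀ i, |w' i| = |w i| := fun i => by
      by_cases h : 0 ≤ f (w i) <;> simp [hw'def, h, abs_neg]
    have hfw' : ∀ i, f (w' i) = |f (w i)| := fun i => by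
      by_cases h : 0 ≤ f (w i)
      · simp [hw'def, h, abs_of_nonneg h]
      · simp [hw'def, h, abs_of_neg (lt_of_not_ge h)]
    set d := ∑ i ∈ F, μ i • w' i with hddef
    set c := ∑ i ∈ F, μ i • x (κ i) with hcdef
    have hfd : ε ≤ f d := by
      rw [hddef, map_sum]
      have h1 : ∀ i ∈ F, μ i * ε ≤ f (μ i • w' i) := by
        intro i hi
        rw [map_smul, smul_eq_mul, hfw']
        exact mul_le_mul_of_nonneg_left (hwf i) (hμ0 i hi)
      calc ε = ∑ i ∈ F, μ i * ε := by rw [← Finset.sum_mul, hμ1, one_mul]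
        _ ≤ ∑ i ∈ F, f (μ i • w' i) := Finset.sum_le_sum h1
    have hdc : |d| ≤ |c| := by
      have h1 : |d| ≤ ∑ i ∈ F, μ i • |x (κ i)| := by
        refine (finset_abs_sum_le F (fun i => μ i • w' i)).trans ?_
        refine Finset.sum_le_sum fun i hi => ?_
        rw [abs_rsmul_eq' (w' i) (μ i), abs_of_nonneg (hμ0 i hi), habs i]
        exact rsmul_mono (hμ0 i hi) (hwle i)
      have h2 : ∑ i ∈ F, μ i • |x (κ i)| = |c| := by
        rw [hcdef, abs_finsetSum_of_disjoint F (fun i => μ i • x (κ i)) ?_]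
        · exact Finset.sum_congr rfl fun i hi => by
            rw [abs_rsmul_eq' (x (κ i)) (μ i), abs_of_nonneg (hμ0 i hi)]
        · intro i hi j hj hij
          rw [abs_rsmul_eq' (x (κ i)) (μ i), abs_rsmul_eq' (x (κ j)) (μ j)]
          have hdisj : |x (κ i)| ⊓ |x (κ j)| = 0 := hd _ _ (fun hc2 => hij (hκs.injective hc2))
          have step1 : |x (κ i)| ⊓ (|μ j| • |x (κ j)|) = 0 :=
            disjoint_rsmul_right (abs_nonneg _) (abs_nonneg _) hdisj (abs_nonneg (μ j))
          have step2 : (|μ j| • |x (κ j)|) ⊓ |x (κ i)| = 0 := by rwa [inf_comm] at step1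
          have step3 : (|μ j| • |x (κ j)|) ⊓ (|μ i| • |x (κ i)|) = 0 :=
            disjoint_rsmul_right (rsmul_nonneg (abs_nonneg (μ j)) (abs_nonneg _))
              (abs_nonneg _) step2 (abs_nonneg (μ i))
          rwa [inf_comm] at step3
      rw [← h2]; exact h1
    have hdnorm : ‖d‖ ≤ ‖c‖ := by
      have := HasSolidNorm.solid (le_trans hdc (le_of_eq (abs_abs c).symm))
      rwa [norm_abs_eq_norm] at this
    have hfinal : ε < ε := by
      calc ε ≤ f d := hfd
        _ ≤ |f d| := le_abs_self _
        _ ≤ ‖f‖ * ‖d‖ := f.le_opNorm d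
        _ ≤ ‖f‖ * ‖c‖ := mul_le_mul_of_nonneg_left hdnorm (norm_nonneg f)
        _ ≤ (‖f‖ + 1) * ‖c‖ := by nlinarith [norm_nonneg c, norm_nonneg f]
        _ < (‖f‖ + 1) * (ε / (‖f‖ + 1)) := by
            refine mul_lt_mul_of_pos_left ?_ (by positivity)
            exact hsmall
        _ = ε := by field_simp
    exact lt_irrefl ε hfinal

end DWLemma

section PosFunctional
variable {E : Type*} [NormedAddCommGroup E] [Lattice E] [IsOrderedAddMonoid E] [HasSolidNorm E] [NormedSpace ℝ E]

omit [NormedSpace ℝ E] in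
lemma posPart_le_add (a b : E) : (a + b)⁺ ≤ a⁺ + b⁺ := by
  rw [posPart_def]
  exact sup_le (add_le_add (le_posPart a) (le_posPart b))
    (add_nonneg (posPart_nonneg a) (posPart_nonneg b))

omit [NormedSpace ℝ E] in
lemma norm_posPart_le (a : E) : ‖a⁺‖ ≤ ‖a‖ := by
  have h : |a⁺| ≤ |a| := by
    rw [abs_of_nonneg (posPart_nonneg a)]
    exact pp_le_abs a
  exact HasSolidNorm.solid h

omit [NormedSpace ℝ E] in
lemma norm_mono_nonneg {a b : E} (ha : 0 ≤ a) (hab : a ≤ b) : ‖a‖ ≤ ‖b‖ := by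
  refine HasSolidNorm.solid ?_
  rw [abs_of_nonneg ha, abs_of_nonneg (ha.trans hab)]
  exact hab

lemma exists_pos_functional (v : E) (hv0 : 0 ≤ v) (hvne : v ≠ 0) :
    ∃ f : E →L[ℝ] ℝ, (∀ u, 0 ≤ u → 0 ≤ f u) ∧ ‖f‖ ≤ 1 ∧ f v = ‖v‖ := by
  classical
  set N : E → ℝ := fun u => ‖u⁺‖ with hN
  have N_hom : ∀ c : ℝ, 0 < c → ∀ u : E, N (c • u) = c * N u := by
    intro c hc u
    simp only [hN]
    rw [posPart_rsmul hc.le, norm_smul, Real.norm_eq_abs, abs_of_pos hc]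
  have N_add : ∀ u w : E, N (u + w) ≤ N u + N w := by
    intro u w
    simp only [hN]
    calc ‖(u + w)⁺‖ ≤ ‖u⁺ + w⁺‖ :=
          norm_mono_nonneg (posPart_nonneg _) (posPart_le_add u w)
      _ ≤ ‖u⁺‖ + ‖w⁺‖ := norm_add_le _ _
  set f₀ : E →ₗ.[ℝ] ℝ := LinearPMap.mkSpanSingleton v ‖v‖ hvne with hf₀
  have hf₀le : ∀ xd : f₀.domain, f₀ xd ≤ N xd := by
    rintro ⟨xval, hxval⟩
    have hxd : xval ∈ Submodule.span ℝ {v} := hxval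
    obtain ⟨c, hc⟩ := Submodule.mem_span_singleton.mp hxd
    subst hc
    have h2 : f₀ ⟨c • v, hxval⟩ = c • ‖v‖ :=
      LinearPMap.mkSpanSingleton'_apply v ‖v‖ _ c hxval
    rw [h2, smul_eq_mul]
    rcases le_or_gt 0 c with hcs | hcs
    · have heq : N (c • v) = c * ‖v‖ := by
        simp only [hN]
        rw [posPart_rsmul hcs, posPart_eq_self.mpr hv0, norm_smul,
          Real.norm_eq_abs, abs_of_nonneg hcs]
      rw [heq]
    · have h0 : 0 ≤ N (c • v) := norm_nonneg _
      nlinarith [norm_nonneg v]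
  obtain ⟨g, hg1, hg2⟩ := exists_extension_of_le_sublinear f₀ N N_hom N_add hf₀le
  have hgb : ∀ u : E, |g u| ≤ ‖u‖ := by
    intro u
    rw [abs_le]
    constructor
    · have := hg2 (-u)
      have h2 : N (-u) = ‖u⁻‖ := by simp only [hN]; rw [posPart_neg]
      rw [map_neg, h2] at this
      have h3 : ‖u⁻‖ ≤ ‖u‖ := by
        refine HasSolidNorm.solid ?_
        rw [abs_of_nonneg (negPart_nonneg u)]; exact np_le_abs u
      linarith
    · exact (hg2 u).trans (norm_posPart_le u)
  set f : E →L[ℝ] ℝ := g.mkContinuous 1 (fun u => by rw [one_mul]; exact (Real.norm_eq_abs _) ▸ hgb u)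
  refine ⟨f, ?_, ?_, ?_⟩
  · intro u hu
    have := hg2 (-u)
    have h2 : N (-u) = ‖u⁻‖ := by simp only [hN]; rw [posPart_neg]
    rw [map_neg, h2, negPart_eq_zero.mpr hu, norm_zero] at this
    have : 0 ≤ g u := by linarith
    exact this
  · exact LinearMap.mkContinuous_norm_le g zero_le_one _
  · have hvm : v ∈ Submodule.span ℝ {v} := Submodule.mem_span_singleton_self v
    have := hg1 ⟨v, hvm⟩
    have h2 : f₀ ⟨v, hvm⟩ = ‖v‖ := LinearPMap.mkSpanSingleton_apply ℝ ℝ hvne ‖v‖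
    simp only [h2] at this
    exact this

end PosFunctional

section HFunctional
variable {E : Type*} [NormedAddCommGroup E] [Lattice E] [IsOrderedAddMonoid E] [HasSolidNorm E] [NormedSpace ℝ E]

lemma exists_component_functional (f : E →L[ℝ] ℝ) (hpos : ∀ u : E, 0 ≤ u → 0 ≤ f u)
    (hf1 : ‖f‖ ≤ 1) {v : E} (hv : 0 ≤ v) :
    ∃ H : E →L[ℝ] ℝ,
      (∀ u, |H u| ≤ ‖u‖) ∧
      (∀ u, 0 ≤ u → u ≤ v → H u = f u) ∧
      (∀ u, 0 ≤ u → u ⊓ v = 0 → H u = 0) ∧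
      (∀ (u : E) (δ : ℝ), δ < |H u| → ∃ n : ℕ, δ < f (|u| ⊓ n • v)) := by
  classical
  have hfmono : ∀ {a b : E}, a ≤ b → f a ≤ f b := by
    intro a b hab
    have := hpos (b - a) (sub_nonneg.mpr hab)
    rw [map_sub] at this; linarith
  set P : E → ℝ := fun u => sSup (Set.range fun n : ℕ => f (u ⊓ n • v)) with hPdef
  have hbdd : ∀ u : E, BddAbove (Set.range fun n : ℕ => f (u ⊓ n • v)) := by
    intro u
    exact ⟨f u, by rintro _ ⟨n, rfl⟩; exact hfmono inf_le_left⟩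
  have hne : ∀ u : E, (Set.range fun n : ℕ => f (u ⊓ n • v)).Nonempty :=
    fun u => ⟨f (u ⊓ 0 • v), 0, rfl⟩
  have hPle : ∀ u : E, P u ≤ f u := fun u =>
    csSup_le (hne u) (by rintro _ ⟨n, rfl⟩; exact hfmono inf_le_left)
  have hP0 : ∀ u : E, 0 ≤ u → 0 ≤ P u := by
    intro u hu
    have h1 : f (u ⊓ (0:ℕ) • v) = 0 := by
      rw [zero_smul, inf_eq_right.mpr hu, map_zero]
    have h2 : f (u ⊓ (0:ℕ) • v) ≤ P u := le_csSup (hbdd u) ⟨0, rfl⟩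
    rw [h1] at h2; exact h2
  have hPmono : ∀ {a b : E}, a ≤ b → P a ≤ P b := by
    intro a b hab
    refine csSup_le (hne a) ?_
    rintro _ ⟨n, rfl⟩
    exact (hfmono (inf_le_inf_right _ hab)).trans (le_csSup (hbdd b) ⟨n, rfl⟩)
  have hPadd : ∀ u w : E, 0 ≤ u → 0 ≤ w → P (u + w) = P u + P w := by
    intro u w hu hw
    have hle : P (u + w) ≤ P u + P w := by
      refine csSup_le (hne _) ?_
      rintro _ ⟨n, rfl⟩
      have h1 : (u + w) ⊓ n • v ≤ u ⊓ n • v + w ⊓ n • v :=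
        inf_add_le' hu hw (nsmul_nonneg hv n)
      calc f ((u + w) ⊓ n • v) ≤ f (u ⊓ n • v + w ⊓ n • v) := hfmono h1
        _ = f (u ⊓ n • v) + f (w ⊓ n • v) := map_add f _ _
        _ ≤ P u + P w := add_le_add (le_csSup (hbdd u) ⟨n, rfl⟩) (le_csSup (hbdd w) ⟨n, rfl⟩)
    have hge : P u + P w ≤ P (u + w) := by
      have hkey : ∀ n m : ℕ, f (u ⊓ n • v) + f (w ⊓ m • v) ≤ P (u + w) := by
        intro n m
        have h1 : u ⊓ n • v + w ⊓ m • v ≤ (u + w) ⊓ ((n + m) • v) := by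
          refine le_inf (add_le_add inf_le_left inf_le_left) ?_
          rw [add_nsmul]
          exact add_le_add inf_le_right inf_le_right
        calc f (u ⊓ n • v) + f (w ⊓ m • v) = f (u ⊓ n • v + w ⊓ m • v) := (map_add f _ _).symm
          _ ≤ f ((u + w) ⊓ (n + m) • v) := hfmono h1
          _ ≤ P (u + w) := le_csSup (hbdd _) ⟨n + m, rfl⟩
      have h2 : ∀ n : ℕ, f (u ⊓ n • v) ≤ P (u + w) - P w := by
        intro n
        have h3 : P w ≤ P (u + w) - f (u ⊓ n • v) :=
          csSup_le (hne w) (by rintro _ ⟨m, rfl⟩; linarith [hkey n m])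
        linarith
      have h4 : P u ≤ P (u + w) - P w :=
        csSup_le (hne u) (by rintro _ ⟨n, rfl⟩; exact h2 n)
      linarith
    linarith
  -- define H
  set H0 : E → ℝ := fun u => P u⁺ - P u⁻ with hH0def
  have hH0add : ∀ a b : E, H0 (a + b) = H0 a + H0 b := by
    intro a b
    have epos : ∀ y : E, y⁺ = y + y⁻ := fun y => eq_add_of_sub_eq (posPart_sub_negPart y)
    have hid : (a + b)⁺ + (a⁻ + b⁻) = (a + b)⁻ + (a⁺ + b⁺) := by
      rw [epos (a + b), epos a, epos b]; abel
    have hPid : P ((a + b)⁺) + (P a⁻ + P b⁻) = P ((a + b)⁻) + (P a⁺ + P b⁺) := by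
      have l1 : P ((a + b)⁺ + (a⁻ + b⁻)) = P ((a + b)⁺) + (P a⁻ + P b⁻) := by
        rw [hPadd _ _ (posPart_nonneg _) (add_nonneg (negPart_nonneg a) (negPart_nonneg b)),
          hPadd _ _ (negPart_nonneg a) (negPart_nonneg b)]
      have l2 : P ((a + b)⁻ + (a⁺ + b⁺)) = P ((a + b)⁻) + (P a⁺ + P b⁺) := by
        rw [hPadd _ _ (negPart_nonneg _) (add_nonneg (posPart_nonneg a) (posPart_nonneg b)),
          hPadd _ _ (posPart_nonneg a) (posPart_nonneg b)]
      rw [← l1, ← l2, hid]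
    have r1 : H0 (a + b) = P (a + b)⁺ - P (a + b)⁻ := rfl
    have r2 : H0 a = P a⁺ - P a⁻ := rfl
    have r3 : H0 b = P b⁺ - P b⁻ := rfl
    linarith
  have hH0bound : ∀ u : E, |H0 u| ≤ ‖u‖ := by
    intro u
    have h1 : 0 ≤ P u⁺ := hP0 _ (posPart_nonneg u)
    have h2 : 0 ≤ P u⁻ := hP0 _ (negPart_nonneg u)
    have h3 : P u⁺ ≤ P |u| := hPmono (pp_le_abs u)
    have h4 : P u⁻ ≤ P |u| := hPmono (np_le_abs u)
    have h5 : P |u| ≤ f |u| := hPle _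
    have h6 : f |u| ≤ ‖u‖ := by
      calc f |u| ≤ |f (|u|)| := le_abs_self _
        _ ≤ ‖f‖ * ‖(|u|)‖ := f.le_opNorm _
        _ = ‖f‖ * ‖u‖ := by rw [norm_abs_eq_norm]
        _ ≤ 1 * ‖u‖ := mul_le_mul_of_nonneg_right hf1 (norm_nonneg u)
        _ = ‖u‖ := one_mul _
    have hrfl : H0 u = P u⁺ - P u⁻ := rfl
    rw [abs_le]
    constructor <;> linarith
  have hH0cont : Continuous H0 := by
    have hlip : LipschitzWith 1 H0 := by
      refine LipschitzWith.of_dist_le_mul fun a b => ?_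
      have hsub : H0 (a - b) = H0 a - H0 b := by
        have := hH0add (a - b) b
        rw [sub_add_cancel] at this
        linarith
      rw [Real.dist_eq, ← hsub, dist_eq_norm, NNReal.coe_one, one_mul]
      exact hH0bound (a - b)
    exact hlip.continuous
  have hH0zero : H0 0 = 0 := by
    have := hH0add 0 0
    rw [add_zero] at this
    linarith
  set Hhom : E →+ ℝ := AddMonoidHom.mk' H0 hH0add with hHhomdef
  set H : E →L[ℝ] ℝ := Hhom.toRealLinearMap hH0cont with hHdef
  have hHapp : ∀ u, H u = H0 u := fun u => rfl
  have hevalpos : ∀ u : E, 0 ≤ u → H u = P u := by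
    intro u hu
    rw [hHapp]
    have hrfl : H0 u = P u⁺ - P u⁻ := rfl
    rw [hrfl, posPart_eq_self.mpr hu, negPart_eq_zero.mpr hu]
    have : P (0:E) = 0 := by
      refine le_antisymm ?_ (hP0 0 le_rfl)
      refine csSup_le (hne 0) ?_
      rintro _ ⟨n, rfl⟩
      show f ((0:E) ⊓ n • v) ≤ 0
      rw [inf_eq_left.mpr (nsmul_nonneg hv n), map_zero]
    rw [this, sub_zero]
  refine ⟨H, fun u => (hHapp u) ▸ hH0bound u, ?_, ?_, ?_⟩
  · -- u ≤ v nonneg : H u = f u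
    intro u hu huv
    rw [hevalpos u hu]
    refine le_antisymm (hPle u) ?_
    have h1 : u ⊓ (1:ℕ) • v = u := by
      rw [one_smul]
      exact inf_eq_left.mpr huv
    have h2 : f (u ⊓ (1:ℕ) • v) ≤ P u := le_csSup (hbdd u) ⟨1, rfl⟩
    rw [h1] at h2
    exact h2
  · -- disjoint : H u = 0
    intro u hu huv
    rw [hevalpos u hu]
    refine le_antisymm ?_ (hP0 u hu)
    refine csSup_le (hne u) ?_
    rintro _ ⟨n, rfl⟩
    show f (u ⊓ n • v) ≤ 0
    rw [disjoint_nsmul_right hu hv huv n, map_zero]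
  · -- sup extraction
    intro u δ hδ
    have h1 : |H u| ≤ P |u| := by
      rw [hHapp]
      have h2 : 0 ≤ P u⁺ := hP0 _ (posPart_nonneg u)
      have h3 : 0 ≤ P u⁻ := hP0 _ (negPart_nonneg u)
      have h4 : P u⁺ ≤ P |u| := hPmono (pp_le_abs u)
      have h5 : P u⁻ ≤ P |u| := hPmono (np_le_abs u)
      have hrfl : H0 u = P u⁺ - P u⁻ := rfl
      rw [abs_le]; constructor <;> linarith
    have h6 : δ < P |u| := lt_of_lt_of_le hδ h1
    obtain ⟨_, ⟨n, rfl⟩, hn⟩ := exists_lt_of_lt_csSup (hne _) h6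
    exact ⟨n, hn⟩

end HFunctional

section LpInfra

lemma totallyBounded_of_approx {α : Type*} [PseudoMetricSpace α] {s : Set α}
    (h : ∀ δ : ℝ, 0 < δ → ∃ K : Set α, TotallyBounded K ∧ ∀ p ∈ s, ∃ q ∈ K, dist p q ≤ δ) :
    TotallyBounded s := by
  rw [Metric.totallyBounded_iff]
  intro ε hε
  obtain ⟨K, hK, happ⟩ := h (ε / 3) (by positivity)
  obtain ⟨t, htfin, hcover⟩ := Metric.totallyBounded_iff.mp hK (ε / 3) (by positivity)
  refine ⟨t, htfin, ?_⟩
  intro p hp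
  obtain ⟨q, hqK, hdq⟩ := happ p hp
  have hq2 := hcover hqK
  simp only [Set.mem_iUnion] at hq2 ⊢
  obtain ⟨y, hyt, hy⟩ := hq2
  rw [mem_ball] at hy
  refine ⟨y, hyt, ?_⟩
  rw [mem_ball]
  calc dist p y ≤ dist p q + dist q y := dist_triangle _ _ _
    _ < ε / 3 + ε / 3 := add_lt_add_of_le_of_lt hdq hy
    _ < ε := by linarith

variable {E : Type*} [NormedAddCommGroup E] [Lattice E] [IsOrderedAddMonoid E] [HasSolidNorm E] [NormedSpace ℝ E]

lemma exists_lp_operator (Hs : ℕ → E →L[ℝ] ℝ) (hb : ∀ (k : ℕ) (u : E), |Hs k u| ≤ ‖u‖) :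
    ∃ T : E →L[ℝ] lp (fun _ : ℕ => ℝ) ⊤,
      ∀ (u : E) (k : ℕ), (T u : ∀ _ : ℕ, ℝ) k = Hs k u := by
  have hmem : ∀ u : E, Memℓp (fun k => Hs k u) ⊤ := fun u =>
    memℓp_infty ⟨‖u‖, by
      rintro _ ⟨k, rfl⟩
      show ‖Hs k u‖ ≤ ‖u‖
      rw [Real.norm_eq_abs]
      exact hb k u⟩
  set TL : E →ₗ[ℝ] lp (fun _ : ℕ => ℝ) ⊤ :=
    { toFun := fun u => ⟨fun k => Hs k u, hmem u⟩
      map_add' := fun u w => by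
        apply lp.ext
        rw [lp.coeFn_add]
        funext k
        exact map_add (Hs k) u w
      map_smul' := fun c u => by
        apply lp.ext
        rw [lp.coeFn_smul]
        funext k
        exact map_smul (Hs k) c u } with hTL
  have happly : ∀ (u : E) (k : ℕ), (TL u : ∀ _ : ℕ, ℝ) k = Hs k u := fun u k => rfl
  refine ⟨TL.mkContinuous 1 (fun u => ?_), fun u k => rfl⟩
  rw [one_mul]
  refine lp.norm_le_of_forall_le (norm_nonneg u) fun k => ?_
  rw [happly, Real.norm_eq_abs]
  exact hb k u

lemma exists_lp_trunc (N : ℕ) :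
    ∃ φ : (Fin N → ℝ) →L[ℝ] lp (fun _ : ℕ => ℝ) ⊤,
      ∀ (c : Fin N → ℝ) (k : ℕ),
        (φ c : ∀ _ : ℕ, ℝ) k = if h : k < N then c ⟨k, h⟩ else 0 := by
  classical
  have hmem : ∀ c : Fin N → ℝ, Memℓp (fun k => if h : k < N then c ⟨k, h⟩ else 0) ⊤ := by
    intro c
    refine memℓp_infty ⟨‖c‖, ?_⟩
    rintro _ ⟨k, rfl⟩
    by_cases h : k < N
    · simp only [h, dif_pos]
      exact norm_le_pi_norm c ⟨k, h⟩
    · simp only [h, dif_neg, not_false_iff, norm_zero]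
      exact norm_nonneg c
  set φL : (Fin N → ℝ) →ₗ[ℝ] lp (fun _ : ℕ => ℝ) ⊤ :=
    { toFun := fun c => ⟨fun k => if h : k < N then c ⟨k, h⟩ else 0, hmem c⟩
      map_add' := fun c d => by
        apply lp.ext
        rw [lp.coeFn_add]
        funext k
        by_cases h : k < N <;> simp [h]
      map_smul' := fun r c => by
        apply lp.ext
        rw [lp.coeFn_smul]
        funext k
        by_cases h : k < N <;> simp [h] } with hφL
  have happly : ∀ (c : Fin N → ℝ) (k : ℕ),
      (φL c : ∀ _ : ℕ, ℝ) k = if h : k < N then c ⟨k, h⟩ else 0 := fun c k => rfl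
  refine ⟨φL.mkContinuous 1 (fun c => ?_), fun c k => rfl⟩
  rw [one_mul]
  refine lp.norm_le_of_forall_le (norm_nonneg c) fun k => ?_
  rw [happly]
  by_cases h : k < N
  · simp only [h, dif_pos]
    exact norm_le_pi_norm c ⟨k, h⟩
  · simp only [h, dif_neg, not_false_iff, norm_zero]
    exact norm_nonneg c

end LpInfra

section Main
variable {E : Type*} [NormedAddCommGroup E] [Lattice E] [IsOrderedAddMonoid E] [HasSolidNorm E] [NormedSpace ℝ E]

set_option synthInstance.maxHeartbeats 1000000 in
set_option maxHeartbeats 2000000 in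
lemma positiveSchur_of_lp
    (h3 : ∀ T : E →L[ℝ] lp (fun _ : ℕ => ℝ) ⊤, LWCompact T → DWCompact T) :
    PositiveSchurProp E := by
  classical
  intro x hdx hwx
  by_contra hcon
  -- extract a subsequence with norms bounded below
  have hfreq : ∃ ε > 0, ∀ N, ∃ n ≥ N, ε ≤ ‖x n‖ := by
    rw [Metric.tendsto_atTop] at hcon; push_neg at hcon
    obtain ⟨ε, hε, hN⟩ := hcon
    refine ⟨ε, hε, fun N => ?_⟩
    obtain ⟨n, hn, h⟩ := hN N
    refine ⟨n, hn, ?_⟩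
    rwa [Real.dist_eq, sub_zero, abs_of_nonneg (norm_nonneg _)] at h
  obtain ⟨ε, hε, hfr⟩ := hfreq
  obtain ⟨ψ, hψmono, hψ⟩ := Filter.extraction_of_frequently_atTop
    (Filter.frequently_atTop.mpr hfr)
  set y : ℕ → E := fun k => x (ψ k) with hydef
  have hyd : DisjointSeq y := fun k m hkm =>
    hdx _ _ (fun hc => hkm (hψmono.injective hc))
  have hywn : WeaklyNull y := fun g => (hwx g).comp hψmono.tendsto_atTop
  have hynorm : ∀ k, ε ≤ ‖y k‖ := fun k => hψ k
  -- choose the dominant part v k of y k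
  have hvex : ∀ k, ∃ v : E, 0 ≤ v ∧ v ≤ |y k| ∧ ε / 2 ≤ ‖v‖ ∧
      (v = (y k)⁺ ∨ v = (y k)⁻) := by
    intro k
    have hsum : ‖y k‖ ≤ ‖(y k)⁺‖ + ‖(y k)⁻‖ := by
      calc ‖y k‖ = ‖(y k)⁺ - (y k)⁻‖ := by rw [posPart_sub_negPart]
        _ ≤ ‖(y k)⁺‖ + ‖(y k)⁻‖ := norm_sub_le _ _
    rcases le_or_gt (ε / 2) ‖(y k)⁺‖ with h | h
    · exact ⟨(y k)⁺, posPart_nonneg _, pp_le_abs _, h, Or.inl rfl⟩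
    · refine ⟨(y k)⁻, negPart_nonneg _, np_le_abs _, ?_, Or.inr rfl⟩
      have := hynorm k
      linarith
  choose v hv0 hvle hvnorm hvcase using hvex
  have hvne : ∀ k, v k ≠ 0 := by
    intro k hk
    have := hvnorm k
    rw [hk, norm_zero] at this
    linarith
  have hvdisj : ∀ k m, k ≠ m → v k ⊓ v m = 0 := by
    intro k m hkm
    refine le_antisymm ?_ (le_inf (hv0 k) (hv0 m))
    calc v k ⊓ v m ≤ |y k| ⊓ |y m| := inf_le_inf (hvle k) (hvle m)
      _ = 0 := hyd k m hkm
  -- choose the positive functionals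
  have hfex := fun k => exists_pos_functional (v k) (hv0 k) (hvne k)
  choose fs hfpos hfnorm hfval using hfex
  -- choose the component functionals
  have hHex := fun k => exists_component_functional (fs k) (hfpos k) (hfnorm k) (hv0 k)
  choose Hs hHb hHle hHdisj hHsup using hHex
  -- evaluations
  have hposdisj : ∀ k, (y k)⁺ ⊓ (y k)⁻ = 0 := fun k => posPart_inf_negPart_eq_zero (y k)
  have hHdec : ∀ k u, Hs k u = Hs k u⁺ - Hs k u⁻ := by
    intro k u
    have h1 := map_sub (Hs k) u⁺ u⁻
    rw [posPart_sub_negPart] at h1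
    exact h1
  have hHyy : ∀ k, ε / 2 ≤ |Hs k (y k)| := by
    intro k
    rw [hHdec k (y k)]
    rcases hvcase k with hc | hc
    · have h1 : Hs k (y k)⁺ = fs k (v k) := by
        rw [← hc]; exact hHle k _ (hc ▸ posPart_nonneg (y k)) (hc ▸ le_rfl)
      have h2 : Hs k (y k)⁻ = 0 := by
        refine hHdisj k _ (negPart_nonneg _) ?_
        rw [hc, inf_comm]
        exact hposdisj k
      rw [h1, h2, hfval k, sub_zero, abs_of_nonneg (norm_nonneg _)]
      exact hvnorm k
    · have h1 : Hs k (y k)⁻ = fs k (v k) := by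
        rw [← hc]; exact hHle k _ (hc ▸ negPart_nonneg (y k)) (hc ▸ le_rfl)
      have h2 : Hs k (y k)⁺ = 0 := by
        refine hHdisj k _ (posPart_nonneg _) ?_
        rw [hc]
        exact hposdisj k
      rw [h1, h2, hfval k, zero_sub, abs_neg, abs_of_nonneg (norm_nonneg _)]
      exact hvnorm k
  have hHcross : ∀ k m, k ≠ m → Hs k (y m) = 0 := by
    intro k m hkm
    have hdisj : ∀ u : E, 0 ≤ u → u ≤ |y m| → u ⊓ v k = 0 := by
      intro u hu hule
      refine le_antisymm ?_ (le_inf hu (hv0 k))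
      calc u ⊓ v k ≤ |y m| ⊓ |y k| := inf_le_inf hule (hvle k)
        _ = 0 := hyd m k (fun hc => hkm hc.symm)
    rw [hHdec k (y m),
      hHdisj k _ (posPart_nonneg _) (hdisj _ (posPart_nonneg _) (pp_le_abs _)),
      hHdisj k _ (negPart_nonneg _) (hdisj _ (negPart_nonneg _) (np_le_abs _)), sub_zero]
  -- the operator
  obtain ⟨T, hT⟩ := exists_lp_operator Hs hHb
  -- T is LW-compact
  have hTLW : LWCompact T := by
    intro B hB
    obtain ⟨M0, hM0⟩ := isBounded_iff_forall_norm_le.mp hB.1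
    set M := max M0 0 with hM
    have hMb : ∀ b ∈ B, ‖b‖ ≤ M := fun b hb => (hM0 b hb).trans (le_max_left _ _)
    -- uniform decay of the coordinates on B
    have hdecay : ∀ δ : ℝ, 0 < δ → ∃ N : ℕ, ∀ b ∈ B, ∀ k ≥ N, |Hs k b| ≤ δ := by
      intro δ hδ
      by_contra hcon2
      push_neg at hcon2
      have hstep : ∀ N : ℕ, ∃ p : ℕ × E, p.2 ∈ B ∧ N ≤ p.1 ∧ δ < |Hs p.1 p.2| := by
        intro N
        obtain ⟨b, hbB, k, hk, hgt⟩ := hcon2 N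
        exact ⟨(k, b), hbB, hk, hgt⟩
      choose step hstep1 hstep2 hstep3 using hstep
      set s : ℕ → ℕ × E := fun j => Nat.rec (step 0) (fun _ prev => step (prev.1 + 1)) j
        with hsdef
      have hssucc : ∀ j, s (j + 1) = step ((s j).1 + 1) := fun j => rfl
      have hsB : ∀ j, (s j).2 ∈ B := by
        intro j
        cases j with
        | zero => exact hstep1 0
        | succ n => rw [hssucc]; exact hstep1 _
      have hsgt : ∀ j, δ < |Hs (s j).1 (s j).2| := by
        intro j
        cases j with
        | zero => exact hstep3 0
        | succ n => rw [hssucc]; exact hstep3 _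
      have hsmono : StrictMono fun j => (s j).1 := strictMono_nat_of_lt_succ fun j => by
        rw [hssucc]
        exact lt_of_lt_of_le (Nat.lt_succ_self _) (hstep2 _)
      -- extract the disjoint sequence in the solid hull of B
      have hn : ∀ j, ∃ n : ℕ, δ < fs (s j).1 (|(s j).2| ⊓ n • v (s j).1) := fun j =>
        hHsup (s j).1 (s j).2 δ (hsgt j)
      choose nn hnn using hn
      set u : ℕ → E := fun j => |(s j).2| ⊓ nn j • v (s j).1 with hudef
      have hu0 : ∀ j, 0 ≤ u j := fun j =>
        le_inf (abs_nonneg _) (nsmul_nonneg (hv0 _) _)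
      have huSol : ∀ j, u j ∈ SolidHull B := by
        intro j
        refine ⟨(s j).2, hsB j, ?_⟩
        rw [abs_of_nonneg (hu0 j)]
        exact inf_le_left
      have huD : DisjointSeq u := by
        intro i j hij
        rw [abs_of_nonneg (hu0 i), abs_of_nonneg (hu0 j)]
        have hvd : v (s i).1 ⊓ v (s j).1 = 0 :=
          hvdisj _ _ (fun hc => hij (hsmono.injective hc))
        have h1 : v (s i).1 ⊓ nn j • v (s j).1 = 0 :=
          disjoint_nsmul_right (hv0 _) (hv0 _) hvd _
        have h2 : nn j • v (s j).1 ⊓ v (s i).1 = 0 := by rwa [inf_comm] at h1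
        have h3 : nn j • v (s j).1 ⊓ nn i • v (s i).1 = 0 :=
          disjoint_nsmul_right (nsmul_nonneg (hv0 _) _) (hv0 _) h2 _
        have h4 : nn i • v (s i).1 ⊓ nn j • v (s j).1 = 0 := by rwa [inf_comm] at h3
        refine le_antisymm ?_ (le_inf (hu0 i) (hu0 j))
        calc u i ⊓ u j ≤ (nn i • v (s i).1) ⊓ (nn j • v (s j).1) :=
            inf_le_inf inf_le_right inf_le_right
          _ = 0 := h4
      have htend := hB.2 u huSol huD
      have hev := htend.eventually (eventually_lt_nhds hδ)
      obtain ⟨j, hj⟩ := hev.exists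
      have hle : fs (s j).1 (u j) ≤ ‖u j‖ := by
        calc fs (s j).1 (u j) ≤ |fs (s j).1 (u j)| := le_abs_self _
          _ ≤ ‖fs (s j).1‖ * ‖u j‖ := (fs (s j).1).le_opNorm _
          _ ≤ 1 * ‖u j‖ := mul_le_mul_of_nonneg_right (hfnorm _) (norm_nonneg _)
          _ = ‖u j‖ := one_mul _
      have := hnn j
      linarith
    -- totally bounded image
    have htb : TotallyBounded (T '' B) := by
      refine totallyBounded_of_approx fun δ hδ => ?_
      obtain ⟨N, hN⟩ := hdecay δ hδ
      obtain ⟨φ, hφ⟩ := exists_lp_trunc N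
      refine ⟨φ '' (closedBall 0 M),
        ((isCompact_closedBall (0 : Fin N → ℝ) M).image φ.continuous).totallyBounded, ?_⟩
      rintro p ⟨b, hbB, rfl⟩
      set cvec : Fin N → ℝ := fun i => Hs (i : ℕ) b with hcvec
      have hcball : cvec ∈ closedBall (0 : Fin N → ℝ) M := by
        rw [mem_closedBall_zero_iff]
        refine (pi_norm_le_iff_of_nonneg (le_max_right M0 0)).mpr fun i => ?_
        show ‖Hs (i : ℕ) b‖ ≤ M
        rw [Real.norm_eq_abs]
        exact (hHb _ b).trans (hMb b hbB)
      refine ⟨φ cvec, ⟨cvec, hcball, rfl⟩, ?_⟩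
      rw [dist_eq_norm]
      refine lp.norm_le_of_forall_le hδ.le fun k => ?_
      have hco : ((T b - φ cvec : lp (fun _ : ℕ => ℝ) ⊤) : ∀ _ : ℕ, ℝ) k
          = Hs k b - (if h : k < N then cvec ⟨k, h⟩ else 0) := by
        rw [lp.coeFn_sub, Pi.sub_apply, hT, hφ]
      rw [hco]
      by_cases h : k < N
      · simp only [h, dif_pos]
        have : cvec ⟨k, h⟩ = Hs k b := rfl
        rw [this, sub_self, norm_zero]
        exact hδ.le
      · simp only [h, dif_neg, not_false_iff, sub_zero]
        rw [Real.norm_eq_abs]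
        exact hN b hbB k (le_of_not_gt h)
    exact TotallyBounded.isCompact_of_isClosed htb.closure isClosed_closure
  -- but T is not DW-compact: contradiction
  have hA := dwc_of_disjoint_weaklyNull hyd hywn
  have hcomp := h3 T hTLW _ hA
  have hmemc : ∀ k : ℕ, T (y k) ∈ closure (T '' Set.range y) := fun k =>
    subset_closure ⟨y k, ⟨k, rfl⟩, rfl⟩
  obtain ⟨a, _, φ2, hφ2mono, hφ2tend⟩ := hcomp.tendsto_subseq hmemc
  have hsep : ∀ k m : ℕ, k ≠ m → ε / 2 ≤ dist (T (y k)) (T (y m)) := by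
    intro k m hkm
    rw [dist_eq_norm]
    have h1 : ‖((T (y k) - T (y m) : lp (fun _ : ℕ => ℝ) ⊤) : ∀ _ : ℕ, ℝ) k‖
        ≤ ‖T (y k) - T (y m)‖ :=
      lp.norm_apply_le_norm (by norm_num) _ k
    have h2 : ((T (y k) - T (y m) : lp (fun _ : ℕ => ℝ) ⊤) : ∀ _ : ℕ, ℝ) k = Hs k (y k) := by
      rw [lp.coeFn_sub, Pi.sub_apply, hT, hT, hHcross k m hkm, sub_zero]
    rw [h2, Real.norm_eq_abs] at h1
    exact (hHyy k).trans h1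
  rw [Metric.tendsto_atTop] at hφ2tend
  obtain ⟨N2, hN2⟩ := hφ2tend (ε / 4) (by positivity)
  have hd1 : dist (T (y (φ2 N2))) a < ε / 4 := hN2 N2 le_rfl
  have hd2 : dist (T (y (φ2 (N2 + 1)))) a < ε / 4 := hN2 (N2 + 1) (Nat.le_succ _)
  have hne2 : φ2 N2 ≠ φ2 (N2 + 1) :=
    fun hc => (Nat.succ_ne_self N2).symm (hφ2mono.injective hc)
  have hge := hsep (φ2 N2) (φ2 (N2 + 1)) hne2
  have htri : dist (T (y (φ2 N2))) (T (y (φ2 (N2 + 1))))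
      ≤ dist (T (y (φ2 N2))) a + dist (T (y (φ2 (N2 + 1)))) a := dist_triangle_right _ _ _
  linarith

end Main

section Transport
variable {E : Type*} [NormedAddCommGroup E] [Lattice E] [IsOrderedAddMonoid E] [HasSolidNorm E] [NormedSpace ℝ E]

lemma lwCompact_comp_equiv {X Y : Type*} [NormedAddCommGroup X] [NormedSpace ℝ X]
    [NormedAddCommGroup Y] [NormedSpace ℝ Y] (e : X ≃L[ℝ] Y) (T : E →L[ℝ] X)
    (hT : LWCompact T) : LWCompact ((e : X →L[ℝ] Y).comp T) := by
  intro A hA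
  have h1 := hT A hA
  have himg : (e : X →L[ℝ] Y).comp T '' A = e '' (T '' A) := by
    rw [← Set.image_comp]; rfl
  have hcl := e.toHomeomorph.image_closure (⇑T '' A)
  simp only [ContinuousLinearEquiv.coe_toHomeomorph] at hcl
  rw [himg, ← hcl]
  exact h1.image e.continuous

lemma dwCompact_of_comp_equiv {X Y : Type*} [NormedAddCommGroup X] [NormedSpace ℝ X]
    [NormedAddCommGroup Y] [NormedSpace ℝ Y] (e : X ≃L[ℝ] Y) (T : E →L[ℝ] X)
    (hT : DWCompact ((e : X →L[ℝ] Y).comp T)) : DWCompact T := by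
  intro A hA
  have h1 := hT A hA
  have himg : e.symm '' ((e : X →L[ℝ] Y).comp T '' A) = T '' A := by
    rw [← Set.image_comp]
    have : (⇑e.symm ∘ ⇑((e : X →L[ℝ] Y).comp T)) = ⇑T := by
      funext a
      simp only [Function.comp_apply, ContinuousLinearMap.coe_comp',
        ContinuousLinearEquiv.coe_coe]
      exact e.symm_apply_apply (T a)
    rw [this]
  have hcl := e.symm.toHomeomorph.image_closure (⇑((e : X →L[ℝ] Y).comp T) '' A)
  simp only [ContinuousLinearEquiv.coe_toHomeomorph] at hcl
  rw [← himg, ← hcl]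
  exact h1.image e.symm.continuous

end Transport

set_option maxHeartbeats 2000000 in
set_option synthInstance.maxHeartbeats 1000000 in
/-- For a Banach lattice `E`, TFAE: (1) `E` has the positive Schur
property; (2) every LW-compact operator from `E` into an arbitrary Banach space is
DW-compact; (3) every LW-compact operator `T : E → ℓ^∞` is DW-compact. -/
theorem lwCompact_dwCompact_iff_positiveSchur
    {E : Type*} [NormedAddCommGroup E] [Lattice E] [IsOrderedAddMonoid E] [HasSolidNorm E] [NormedSpace ℝ E] [CompleteSpace E] :
    List.TFAE
      [ PositiveSchurProp E,
        ∀ (X : Type*) [NormedAddCommGroup X] [NormedSpace ℝ X] [CompleteSpace X]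
          (T : E →L[ℝ] X), LWCompact T → DWCompact T,
        ∀ T : E →L[ℝ] lp (fun _ : ℕ => ℝ) ⊤, LWCompact T → DWCompact T ] := by
  tfae_have 1 → 2 := by
    intro h1 X _ _ _ T hT A hA
    exact hT A ⟨hA.1, fun z hz hdz => h1 z hdz (hA.2 z hz hdz)⟩
  tfae_have 2 → 3 := by
    intro h2 T hT
    exact dwCompact_of_comp_equiv
      (ContinuousLinearEquiv.ulift (R₁ := ℝ) (M₁ := lp (fun _ : ℕ => ℝ) ⊤)).symm T
      (h2 _ _ (lwCompact_comp_equiv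
        (ContinuousLinearEquiv.ulift (R₁ := ℝ) (M₁ := lp (fun _ : ℕ => ℝ) ⊤)).symm T hT))

  tfae_have 3 → 1 := positiveSchur_of_lp
  tfae_finish
end

section
/- A reflexive real Banach lattice E has the (d)-DP property if and only if E is finite dimensional. -/
open Filter Topology Metric Bornology ZeroAtInfty NormedSpace

namespace DDPAux

variable {E : Type*} [NormedAddCommGroup E] [Lattice E] [IsOrderedAddMonoid E] [HasSolidNorm E]

lemma inf_add_le3 {u a b : E} (hu : 0 ≤ u) (ha : 0 ≤ a) (hb : 0 ≤ b) :
    u ⊓ (a + b) ≤ u ⊓ a + u ⊓ b := by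
  rw [← sub_le_iff_le_add']
  have h1 : u ⊓ (a + b) - u ⊓ a = (u ⊓ (a + b) - u) ⊔ (u ⊓ (a + b) - a) := by
    rw [sub_eq_add_neg, neg_inf, add_sup, ← sub_eq_add_neg, ← sub_eq_add_neg]
  rw [h1]
  apply sup_le
  · calc u ⊓ (a + b) - u ≤ u - u := by
          gcongr
          exact inf_le_left
      _ = 0 := sub_self u
      _ ≤ u ⊓ b := le_inf hu hb
  · calc u ⊓ (a + b) - a ≤ (u + a) ⊓ (a + b) - a := by gcongr; exact le_add_of_nonneg_right ha
      _ = (u ⊓ b) + a - a := by rw [inf_add, add_comm b a]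
      _ = u ⊓ b := add_sub_cancel_right _ _

end DDPAux

namespace DDPAux

variable {E : Type*} [NormedAddCommGroup E] [Lattice E] [IsOrderedAddMonoid E] [HasSolidNorm E]

lemma disj_add {u a b : E} (hu : 0 ≤ u) (ha : 0 ≤ a) (hb : 0 ≤ b)
    (h1 : u ⊓ a = 0) (h2 : u ⊓ b = 0) : u ⊓ (a + b) = 0 :=
  le_antisymm (by simpa [h1, h2] using inf_add_le3 hu ha hb)
    (le_inf hu (add_nonneg ha hb))

lemma disj_nsmul {u a : E} (hu : 0 ≤ u) (ha : 0 ≤ a) (h : u ⊓ a = 0) :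
    ∀ n : ℕ, u ⊓ (n • a) = 0 := by
  intro n
  induction n with
  | zero => simpa using inf_of_le_right hu
  | succ k ih =>
      rw [succ_nsmul]
      exact disj_add hu (nsmul_nonneg ha k) ha ih h

lemma nonneg_of_nsmul_nonneg {a : E} {n : ℕ} (hn : 0 < n) (h : 0 ≤ n • a) : 0 ≤ a := by
  obtain ⟨m, rfl⟩ : ∃ m, n = m + 1 := ⟨n - 1, by omega⟩
  have hpn : a⁻ ⊓ ((m + 1) • a⁺) = 0 :=
    disj_nsmul (negPart_nonneg a) (posPart_nonneg a)
      (by rw [inf_comm]; exact posPart_inf_negPart_eq_zero a) (m + 1)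
  have h2 : (m + 1) • a = (m + 1) • a⁺ - (m + 1) • a⁻ := by
    rw [← smul_sub, posPart_sub_negPart]
  have h1 : (m + 1) • a⁻ ≤ (m + 1) • a⁺ := by
    rw [h2] at h; exact sub_nonneg.mp h
  have h3 : a⁻ ≤ (m + 1) • a⁺ := by
    refine le_trans ?_ h1
    rw [succ_nsmul]
    exact le_add_of_nonneg_left (nsmul_nonneg (negPart_nonneg a) m)
  have h4 : a⁻ = 0 := by rw [← inf_of_le_left h3]; exact hpn
  have := posPart_sub_negPart a
  rw [h4, sub_zero] at this
  rw [← this]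
  exact posPart_nonneg a

end DDPAux

namespace DDPAux

variable {E : Type*} [NormedAddCommGroup E] [Lattice E] [IsOrderedAddMonoid E] [HasSolidNorm E] [NormedSpace ℝ E]

lemma abs_eq_sup_neg' (a : E) : |a| = a ⊔ -a := rfl

lemma smul_nonneg_real {r : ℝ} (hr : 0 ≤ r) {a : E} (ha : 0 ≤ a) : 0 ≤ r • a := by
  set c : ℕ → ℝ := fun n => (⌈r * (n + 1)⌉₊ : ℝ) / (n + 1) with hc
  have hmem : ∀ n : ℕ, 0 ≤ c n • a := by
    intro n
    have hpos : (0:ℝ) < (n:ℝ) + 1 := by positivity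
    apply nonneg_of_nsmul_nonneg (Nat.succ_pos n)
    have hne : ((n:ℝ) + 1) ≠ 0 := by positivity
    have key : ((n + 1 : ℕ) : ℝ) * c n = (⌈r * ((n:ℝ) + 1)⌉₊ : ℝ) := by
      rw [hc]
      push_cast
      rw [mul_comm, div_mul_cancel₀ _ hne]
    have : (n + 1 : ℕ) • (c n • a) = (⌈r * ((n:ℝ) + 1)⌉₊ : ℕ) • a := by
      rw [← Nat.cast_smul_eq_nsmul ℝ, ← Nat.cast_smul_eq_nsmul ℝ (⌈r * ((n:ℝ) + 1)⌉₊), smul_smul, key]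
    rw [this]
    exact nsmul_nonneg ha _
  have hrc : Tendsto c atTop (𝓝 r) := by
    have hle : ∀ n : ℕ, r ≤ c n := by
      intro n
      have hpos : (0:ℝ) < (n:ℝ) + 1 := by positivity
      rw [hc, le_div_iff₀ hpos]
      exact Nat.le_ceil _
    have hub : ∀ n : ℕ, c n ≤ r + 1 / ((n:ℝ) + 1) := by
      intro n
      have hpos : (0:ℝ) < (n:ℝ) + 1 := by positivity
      rw [hc, div_le_iff₀ hpos]
      have h1 : (⌈r * (n + 1)⌉₊ : ℝ) < r * (n + 1) + 1 :=
        Nat.ceil_lt_add_one (by positivity)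
      calc (⌈r * ((n:ℝ) + 1)⌉₊ : ℝ) ≤ r * ((n:ℝ) + 1) + 1 := le_of_lt h1
        _ = (r + 1 / ((n:ℝ)+1)) * ((n:ℝ)+1) := by field_simp
    have h2 : Tendsto (fun n : ℕ => r + 1 / ((n:ℝ) + 1)) atTop (𝓝 (r + 0)) :=
      tendsto_const_nhds.add tendsto_one_div_add_atTop_nhds_zero_nat
    rw [add_zero] at h2
    exact tendsto_of_tendsto_of_tendsto_of_le_of_le tendsto_const_nhds h2 hle hub
  have htend : Tendsto (fun n => c n • a) atTop (𝓝 (r • a)) := hrc.smul_const a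
  exact isClosed_nonneg.mem_of_tendsto htend (Filter.Eventually.of_forall hmem)

lemma smul_le_smul_real {r : ℝ} (hr : 0 ≤ r) {a b : E} (h : a ≤ b) : r • a ≤ r • b := by
  rw [← sub_nonneg, ← smul_sub]
  exact smul_nonneg_real hr (sub_nonneg.mpr h)

lemma smul_sup_real {r : ℝ} (hr : 0 ≤ r) (a b : E) : r • (a ⊔ b) = r • a ⊔ r • b := by
  rcases eq_or_lt_of_le hr with h0 | hpos
  · simp [← h0]
  · refine le_antisymm ?_ (sup_le (smul_le_smul_real hr le_sup_left)
      (smul_le_smul_real hr le_sup_right))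
    have h1 : a ⊔ b ≤ r⁻¹ • (r • a ⊔ r • b) := by
      refine sup_le ?_ ?_
      · have := smul_le_smul_real (le_of_lt (inv_pos.mpr hpos)) (le_sup_left (a := r • a) (b := r • b))
        rwa [inv_smul_smul₀ (ne_of_gt hpos)] at this
      · have := smul_le_smul_real (le_of_lt (inv_pos.mpr hpos)) (le_sup_right (a := r • a) (b := r • b))
        rwa [inv_smul_smul₀ (ne_of_gt hpos)] at this
    have := smul_le_smul_real hr h1
    rwa [smul_inv_smul₀ (ne_of_gt hpos)] at this

lemma abs_smul_real (r : ℝ) (a : E) : |r • a| = |r| • |a| := by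
  rcases le_or_gt 0 r with hr | hr
  · rw [abs_of_nonneg hr, abs_eq_sup_neg', abs_eq_sup_neg', smul_sup_real hr, smul_neg]
  · rw [abs_of_neg hr, ← abs_neg, ← neg_smul, abs_eq_sup_neg', abs_eq_sup_neg',
      smul_sup_real (by linarith : (0:ℝ) ≤ -r), smul_neg]

lemma disj_smul_real {u a : E} (hu : 0 ≤ u) (ha : 0 ≤ a) (h : u ⊓ a = 0)
    {r : ℝ} (hr : 0 ≤ r) : u ⊓ (r • a) = 0 := by
  have hra : 0 ≤ r • a := smul_nonneg_real hr ha
  refine le_antisymm ?_ (le_inf hu hra)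
  have h1 : r • a ≤ (⌈r⌉₊ : ℕ) • a := by
    rw [← Nat.cast_smul_eq_nsmul ℝ, ← sub_nonneg, ← sub_smul]
    exact smul_nonneg_real (by simpa using Nat.le_ceil r) ha
  calc u ⊓ (r • a) ≤ u ⊓ ((⌈r⌉₊ : ℕ) • a) := inf_le_inf_left u h1
    _ = 0 := disj_nsmul hu ha h _

/-- The "disjoint complement" of `u` as a submodule. -/
def disjSubmodule (u : E) : Submodule ℝ E where
  carrier := {y | |y| ⊓ |u| = 0}
  zero_mem' := by
    simp only [Set.mem_setOf_eq, abs_zero]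
    exact inf_of_le_left (abs_nonneg u)
  add_mem' := by
    intro y z hy hz
    simp only [Set.mem_setOf_eq] at *
    refine le_antisymm ?_ (le_inf (abs_nonneg _) (abs_nonneg _))
    calc |y + z| ⊓ |u| ≤ (|y| + |z|) ⊓ |u| := inf_le_inf_right _ (abs_add_le y z)
      _ = 0 := by
          rw [inf_comm]
          exact disj_add (abs_nonneg u) (abs_nonneg y) (abs_nonneg z)
            (by rw [inf_comm]; exact hy) (by rw [inf_comm]; exact hz)
  smul_mem' := by
    intro c y hy
    simp only [Set.mem_setOf_eq] at *
    rw [abs_smul_real, inf_comm]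
    exact disj_smul_real (abs_nonneg u) (abs_nonneg y) (by rw [inf_comm]; exact hy)
      (abs_nonneg c)

lemma isClosed_disjSubmodule (u : E) : IsClosed ((disjSubmodule u : Submodule ℝ E) : Set E) := by
  have hcont : Continuous fun y : E => |y| ⊓ |u| := by
    have habs : Continuous fun y : E => |y| := continuous_id.sup continuous_neg
    exact habs.inf continuous_const
  have : ((disjSubmodule u : Submodule ℝ E) : Set E) = (fun y : E => |y| ⊓ |u|) ⁻¹' {0} := rfl
  rw [this]
  exact isClosed_singleton.preimage hcont

end DDPAux

namespace DDPAux

open NormedSpace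

section Weak

variable {E : Type*} [NormedAddCommGroup E] [NormedSpace ℝ E]

lemma eval_weak_continuous (f : E →L[ℝ] ℝ) :
    Continuous fun x : WeakSpace ℝ E => f ((toWeakSpace ℝ E).symm x) :=
  WeakBilin.eval_continuous _ f

theorem isCompact_weak_closedBall (h : Function.Surjective (inclusionInDoubleDual ℝ E))
    (r : ℝ) : IsCompact (toWeakSpace ℝ E '' closedBall 0 r) := by
  set J := inclusionInDoubleDual ℝ E with hJ
  have hinj : Function.Injective J := (inclusionInDoubleDualLi ℝ (E := E)).injective
  let Jeq : E ≃ₗ[ℝ] StrongDual ℝ (StrongDual ℝ E) :=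
    LinearEquiv.ofBijective (J : E →ₗ[ℝ] StrongDual ℝ (StrongDual ℝ E)) ⟨hinj, h⟩
  set T : WeakDual ℝ (StrongDual ℝ E) → WeakSpace ℝ E :=
    fun ψ => toWeakSpace ℝ E (Jeq.symm (WeakDual.toStrongDual ψ)) with hT
  have hTval : ∀ (ψ : WeakDual ℝ (StrongDual ℝ E)) (f : StrongDual ℝ E),
      f ((toWeakSpace ℝ E).symm (T ψ)) = ψ f := by
    intro ψ f
    have h1 : J (Jeq.symm (WeakDual.toStrongDual ψ)) = WeakDual.toStrongDual ψ :=
      Jeq.apply_symm_apply _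
    have h2 : f ((toWeakSpace ℝ E).symm (T ψ)) = f (Jeq.symm (WeakDual.toStrongDual ψ)) := rfl
    rw [h2, ← NormedSpace.dual_def ℝ E, h1]
    rfl
  have hTcont : Continuous T := by
    apply WeakBilin.continuous_of_continuous_eval
    intro f
    have : (fun ψ : WeakDual ℝ (StrongDual ℝ E) =>
        ((topDualPairing ℝ E).flip) ((toWeakSpace ℝ E).symm (T ψ) : E) f) =
        fun ψ : WeakDual ℝ (StrongDual ℝ E) => ψ f := by
      funext ψ
      exact hTval ψ f
    exact this ▸ WeakDual.eval_continuous f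
  have himg : toWeakSpace ℝ E '' closedBall 0 r =
      T '' (WeakDual.toStrongDual ⁻¹' closedBall 0 r) := by
    apply Set.Subset.antisymm
    · rintro - ⟨x, hx, rfl⟩
      refine ⟨J x, ?_, ?_⟩
      · simp only [Set.mem_preimage, mem_closedBall_zero_iff] at hx ⊢
        refine (mem_closedBall_zero_iff (E := StrongDual ℝ (StrongDual ℝ E))).mpr ?_
        calc ‖(WeakDual.toStrongDual (J x : WeakDual ℝ (StrongDual ℝ E)))‖
            = ‖(inclusionInDoubleDualLi ℝ (E := E)) x‖ := rfl
          _ = ‖x‖ := (inclusionInDoubleDualLi ℝ (E := E)).norm_map x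
          _ ≤ r := hx
      · show toWeakSpace ℝ E (Jeq.symm (J x)) = toWeakSpace ℝ E x
        congr 1
        exact Jeq.symm_apply_apply x
    · rintro - ⟨ψ, hψ, rfl⟩
      refine ⟨Jeq.symm (WeakDual.toStrongDual ψ), ?_, rfl⟩
      simp only [Set.mem_preimage, mem_closedBall_zero_iff] at hψ ⊢
      calc ‖(Jeq.symm (WeakDual.toStrongDual ψ) : E)‖
          = ‖(inclusionInDoubleDualLi ℝ (E := E)) (Jeq.symm (WeakDual.toStrongDual ψ))‖ :=
            ((inclusionInDoubleDualLi ℝ (E := E)).norm_map _).symm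
        _ = ‖WeakDual.toStrongDual ψ‖ := by
            congr 1
            exact Jeq.apply_symm_apply _
        _ ≤ r := (mem_closedBall_zero_iff (E := StrongDual ℝ (StrongDual ℝ E))).mp hψ
  rw [himg]
  exact (WeakDual.isCompact_closedBall (𝕜 := ℝ) (0 : StrongDual ℝ (StrongDual ℝ E)) r).image hTcont

theorem mem_of_clusterPt (V : Submodule ℝ E) (hVc : IsClosed (V : Set E)) {u : ℕ → E}
    (hu : ∀ᶠ n in atTop, u n ∈ V) {a : E}
    (ha : MapClusterPt (toWeakSpace ℝ E a) atTop (fun n => toWeakSpace ℝ E (u n))) :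
    a ∈ V := by
  by_contra hx
  obtain ⟨f, s, hfV, hfa⟩ := geometric_hahn_banach_closed_point V.convex hVc hx
  have hf0 : ∀ b ∈ V, f b = 0 := by
    intro b hb
    by_contra hfb
    have h1 : f (((s + 1) / f b) • b) < s := hfV _ (V.smul_mem _ hb)
    rw [map_smul, smul_eq_mul, div_mul_cancel₀ _ hfb] at h1
    have hs0 : 0 < s := by simpa using hfV 0 V.zero_mem
    linarith
  have hs0 : 0 < s := by simpa using hfV 0 V.zero_mem
  have h2 : MapClusterPt (f a) atTop (fun n => f (u n)) := by
    have h2' := ha.continuousAt_comp (eval_weak_continuous f).continuousAt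
    exact h2'
  have h3 : map (fun n => f (u n)) atTop ≤ 𝓟 ({0} : Set ℝ) := by
    rw [le_principal_iff, mem_map]
    filter_upwards [hu] with n hn
    simp [hf0 _ hn]
  have h4 : f a ∈ closure ({0} : Set ℝ) := mem_closure_iff_clusterPt.mpr (h2.clusterPt.mono h3)
  rw [closure_singleton, Set.mem_singleton_iff] at h4
  linarith [hfa]

end Weak

end DDPAux

open Filter Topology Metric Bornology

namespace DDPAux

variable {E : Type*} [NormedAddCommGroup E] [Lattice E] [IsOrderedAddMonoid E] [HasSolidNorm E] [NormedSpace ℝ E]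

theorem weaklyNull_of_disjoint (h : Function.Surjective (NormedSpace.inclusionInDoubleDual ℝ E))
    {x : ℕ → E} (hd : DisjointSeq x) {r : ℝ} (hb : ∀ n, ‖x n‖ ≤ r) : WeaklyNull x := by
  intro f
  rw [Metric.tendsto_nhds]
  by_contra hcon
  push_neg at hcon
  obtain ⟨ε, hε, hfreq⟩ := hcon
  simp only [← not_lt] at hfreq
  have hfreq' : ∃ᶠ n in atTop, ε ≤ |f (x n)| := by
    apply hfreq.mono
    intro n hn
    rw [Real.dist_eq, sub_zero] at hn
    exact not_lt.mp hn
  obtain ⟨φ, hφ, hφval⟩ := Filter.extraction_of_frequently_atTop hfreq'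
  set y : ℕ → E := fun n => x (φ n) with hy
  -- find a weak cluster point
  have hmem : ∀ n, toWeakSpace ℝ E (y n) ∈ toWeakSpace ℝ E '' closedBall 0 r :=
    fun n => ⟨y n, by simpa [mem_closedBall_zero_iff] using hb (φ n), rfl⟩
  have hK := isCompact_weak_closedBall h r
  have hneb : (map (fun n => toWeakSpace ℝ E (y n)) atTop).NeBot := map_neBot
  have hle : map (fun n => toWeakSpace ℝ E (y n)) atTop ≤ 𝓟 (toWeakSpace ℝ E '' closedBall 0 r) := by
    rw [le_principal_iff, mem_map]
    exact Filter.Eventually.of_forall hmem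
  obtain ⟨w, hwK, hwc⟩ := hK.exists_clusterPt hle
  obtain ⟨a, _, rfl⟩ := hwK
  have hac : MapClusterPt (toWeakSpace ℝ E a) atTop (fun n => toWeakSpace ℝ E (y n)) := hwc
  -- a is disjoint from every y k
  have hdisj : ∀ k, |a| ⊓ |y k| = 0 := by
    intro k
    have hVc := isClosed_disjSubmodule (y k)
    have hev : ∀ᶠ n in atTop, y n ∈ disjSubmodule (y k) := by
      filter_upwards [Filter.eventually_gt_atTop k] with n hn
      show |y n| ⊓ |y k| = 0
      exact hd (φ n) (φ k) (hφ hn).ne'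
    exact mem_of_clusterPt _ hVc hev hac
  -- hence a = 0
  have ha0 : a = 0 := by
    have haV : a ∈ disjSubmodule a := by
      have hev : ∀ᶠ n in atTop, y n ∈ disjSubmodule a := by
        apply Filter.Eventually.of_forall
        intro n
        show |y n| ⊓ |a| = 0
        rw [inf_comm]
        exact hdisj n
      exact mem_of_clusterPt _ (isClosed_disjSubmodule a) hev hac
    have : |a| ⊓ |a| = 0 := haV
    rw [inf_idem] at this
    have h1 : a ≤ 0 := le_of_le_of_eq (le_abs_self a) this
    have h2 : -a ≤ 0 := le_of_le_of_eq (neg_le_abs a) this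
    exact le_antisymm h1 (by simpa using neg_nonpos.mp h2)
  -- contradiction with ε ≤ |f (y n)|
  have h2 : MapClusterPt (f a) atTop (fun n => f (y n)) := by
    have h2' := hac.continuousAt_comp (eval_weak_continuous f).continuousAt
    exact h2'
  have h3 : map (fun n => f (y n)) atTop ≤ 𝓟 {t : ℝ | ε ≤ |t|} := by
    rw [le_principal_iff, mem_map]
    exact Filter.Eventually.of_forall fun n => hφval n
  have hcl : IsClosed {t : ℝ | ε ≤ |t|} := by
    have : {t : ℝ | ε ≤ |t|} = Set.Iic (-ε) ∪ Set.Ici ε := by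
      ext t; simp [abs_le', le_abs, Set.mem_union, Set.mem_Iic, Set.mem_Ici]
      constructor
      · intro ht; rcases ht with h | h
        · right; exact h
        · left; linarith
      · intro ht; rcases ht with h | h
        · right; linarith
        · left; exact h
    rw [this]
    exact isClosed_Iic.union isClosed_Ici
  have h4 : f a ∈ {t : ℝ | ε ≤ |t|} := by
    have := mem_closure_iff_clusterPt.mpr (h2.clusterPt.mono h3)
    rwa [hcl.closure_eq] at this
  rw [ha0, map_zero] at h4
  simp only [Set.mem_setOf_eq, abs_zero] at h4
  linarith

end DDPAux

namespace DDPAux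

open NormedSpace TopologicalSpace

section Reflexive

variable {X : Type*} [NormedAddCommGroup X] [NormedSpace ℝ X]

lemma exists_functional_of_not_mem (Z : Submodule ℝ X) (hZc : IsClosed (Z : Set X)) {x : X}
    (hx : x ∉ Z) : ∃ f : X →L[ℝ] ℝ, (∀ z ∈ Z, f z = 0) ∧ f x ≠ 0 := by
  obtain ⟨f, s, hfZ, hfx⟩ := geometric_hahn_banach_closed_point Z.convex hZc hx
  have hs0 : 0 < s := by simpa using hfZ 0 Z.zero_mem
  refine ⟨f, ?_, ?_⟩
  · intro z hz
    by_contra hfb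
    have h1 : f (((s + 1) / f z) • z) < s := hfZ _ (Z.smul_mem _ hz)
    rw [map_smul, smul_eq_mul, div_mul_cancel₀ _ hfb] at h1
    linarith
  · intro h0
    rw [h0] at hfx
    linarith

theorem refl_dual (h : Function.Surjective (inclusionInDoubleDual ℝ X)) :
    Function.Surjective (inclusionInDoubleDual ℝ (StrongDual ℝ X)) := by
  intro Φ
  refine ⟨Φ.comp (inclusionInDoubleDual ℝ X), ?_⟩
  apply ContinuousLinearMap.ext
  intro ψ
  obtain ⟨x, rfl⟩ := h ψ
  rfl

/-- Restriction of functionals to a submodule, as a continuous linear map. -/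
noncomputable def restrictDual (Z : Submodule ℝ X) :
    StrongDual ℝ X →L[ℝ] StrongDual ℝ ↥Z :=
  (ContinuousLinearMap.compSL ↥Z X ℝ (RingHom.id ℝ) (RingHom.id ℝ)).flip Z.subtypeL

@[simp] lemma restrictDual_apply (Z : Submodule ℝ X) (f : StrongDual ℝ X) (z : ↥Z) :
    restrictDual Z f z = f z := rfl

theorem refl_subspace (h : Function.Surjective (inclusionInDoubleDual ℝ X))
    (Z : Submodule ℝ X) (hZc : IsClosed (Z : Set X)) :
    Function.Surjective (inclusionInDoubleDual ℝ ↥Z) := by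
  intro ψ
  set ρ := restrictDual Z with hρ
  set Ψ : StrongDual ℝ (StrongDual ℝ X) := ψ.comp ρ with hΨ
  obtain ⟨x, hxΨ⟩ := h Ψ
  have hxZ : x ∈ Z := by
    by_contra hx
    obtain ⟨f, hfZ, hfx⟩ := exists_functional_of_not_mem Z hZc hx
    have h1 : ρ f = 0 := ContinuousLinearMap.ext fun z => by
      simpa [hρ] using hfZ z z.2
    have h2 : Ψ f = 0 := by
      rw [show Ψ f = ψ (ρ f) from rfl, h1, map_zero]
    have h3 : Ψ f = f x := by rw [← hxΨ]; rfl
    exact hfx (by rw [← h3, h2])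
  refine ⟨⟨x, hxZ⟩, ?_⟩
  apply ContinuousLinearMap.ext
  intro g
  obtain ⟨G, hG1, -⟩ := exists_extension_norm_eq Z g
  have hρG : ρ G = g := ContinuousLinearMap.ext fun z => by simpa [hρ] using hG1 z
  calc (inclusionInDoubleDual ℝ ↥Z ⟨x, hxZ⟩) g = g ⟨x, hxZ⟩ := rfl
    _ = G x := (hG1 ⟨x, hxZ⟩).symm
    _ = Ψ G := by rw [← hxΨ]; rfl
    _ = ψ (ρ G) := rfl
    _ = ψ g := by rw [hρG]

theorem separable_of_dual_sep [SeparableSpace (StrongDual ℝ X)] :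
    SeparableSpace X := by
  obtain ⟨D, hDc, hDd⟩ := TopologicalSpace.exists_countable_dense (StrongDual ℝ X)
  have hch : ∀ f : StrongDual ℝ X, ∃ x : X, ‖x‖ ≤ 1 ∧ ‖f‖ / 2 ≤ f x := by
    intro f
    rcases eq_or_ne f 0 with rfl | hf
    · exact ⟨0, by simp⟩
    · have hpos : 0 < ‖f‖ := norm_pos_iff.mpr hf
      obtain ⟨x, hx1, hx2⟩ := f.exists_lt_apply_of_lt_opNorm (half_lt_self hpos)
      rcases le_or_gt 0 (f x) with hfx | hfx
      · refine ⟨x, le_of_lt hx1, ?_⟩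
        rw [Real.norm_eq_abs, abs_of_nonneg hfx] at hx2
        exact le_of_lt hx2
      · refine ⟨-x, by simpa using le_of_lt hx1, ?_⟩
        rw [Real.norm_eq_abs, abs_of_neg hfx] at hx2
        rw [map_neg]
        linarith
  choose xf hxf1 hxf2 using hch
  set T : Set X := xf '' D with hTdef
  have hTc : T.Countable := hDc.image _
  set M := (Submodule.span ℝ T).topologicalClosure with hM
  have huniv : (M : Set X) = Set.univ := by
    by_contra hne
    obtain ⟨x0, hx0⟩ : ∃ x0, x0 ∉ M := by
      by_contra hall
      push_neg at hall
      exact hne (Set.eq_univ_of_forall hall)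
    obtain ⟨f, hfM, hfx0⟩ :=
      exists_functional_of_not_mem M (Submodule.isClosed_topologicalClosure _) hx0
    have hfpos : 0 < ‖f‖ := by
      rcases eq_or_lt_of_le (norm_nonneg f) with h0 | h0
      · exfalso
        apply hfx0
        have : f = 0 := (ContinuousLinearMap.opNorm_zero_iff f).mp h0.symm
        rw [this]; rfl
      · exact h0
    obtain ⟨g, hgD, hgf⟩ : ∃ g ∈ D, dist f g < ‖f‖ / 4 := by
      have := Metric.mem_closure_iff.mp (by rw [hDd.closure_eq]; trivial : f ∈ closure D) (‖f‖/4) (by positivity)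
      obtain ⟨g, hg1, hg2⟩ := this
      exact ⟨g, hg1, hg2⟩
    have hTg : xf g ∈ M := by
      apply Submodule.le_topologicalClosure
      exact Submodule.subset_span ⟨g, hgD, rfl⟩
    have hfg0 : f (xf g) = 0 := hfM _ hTg
    have hgnorm : ‖f‖ - ‖f‖/4 ≤ ‖g‖ := by
      have := norm_sub_norm_le f g
      rw [← dist_eq_norm] at this
      linarith
    have h5 : ‖g‖ / 2 ≤ g (xf g) := hxf2 g
    have h6 : g (xf g) = (g - f) (xf g) := by simp [hfg0]
    have h7 : (g - f) (xf g) ≤ ‖g - f‖ * ‖xf g‖ := le_trans (le_abs_self _)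
      ((g - f).le_opNorm _)
    have h8 : ‖g - f‖ * ‖xf g‖ ≤ ‖f‖/4 := by
      have h9 : ‖g - f‖ < ‖f‖ / 4 := by rw [← dist_eq_norm, dist_comm]; exact hgf
      calc ‖g - f‖ * ‖xf g‖ ≤ (‖f‖/4) * 1 :=
        mul_le_mul (le_of_lt h9) (hxf1 g) (norm_nonneg _) (by positivity)
        _ = ‖f‖/4 := mul_one _
    linarith
  have hsep : IsSeparable (M : Set X) := by
    rw [hM, Submodule.topologicalClosure_coe]
    exact (hTc.isSeparable.span).closure
  rw [huniv] at hsep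
  exact isSeparable_univ_iff.mp hsep

end Reflexive

end DDPAux

namespace DDPAux

open NormedSpace TopologicalSpace

theorem exists_weak_conv_subseq {X : Type*} [NormedAddCommGroup X] [NormedSpace ℝ X]
    (hX : Function.Surjective (inclusionInDoubleDual ℝ X)) {f : ℕ → X} {C : ℝ}
    (hb : ∀ n, ‖f n‖ ≤ C) :
    ∃ φ : ℕ → ℕ, StrictMono φ ∧ ∃ F : X,
      ∀ Φ : StrongDual ℝ X, Tendsto (fun k => Φ (f (φ k))) atTop (𝓝 (Φ F)) := by
  classical
  have hC0 : 0 ≤ C := le_trans (norm_nonneg (f 0)) (hb 0)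
  set Z := (Submodule.span ℝ (Set.range f)).topologicalClosure with hZ
  have hZc : IsClosed (Z : Set X) := Submodule.isClosed_topologicalClosure _
  have hfZ : ∀ n, f n ∈ Z :=
    fun n => Submodule.le_topologicalClosure _ (Submodule.subset_span ⟨n, rfl⟩)
  haveI hZsep : SeparableSpace ↥Z := by
    have h1 : IsSeparable (Z : Set X) := by
      rw [hZ, Submodule.topologicalClosure_coe]
      exact ((Set.countable_range f).isSeparable.span).closure
    exact h1.separableSpace
  have hZrefl := refl_subspace hX Z hZc
  haveI hsep2 : SeparableSpace (StrongDual ℝ (StrongDual ℝ ↥Z)) :=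
    (Function.Surjective.denseRange hZrefl).separableSpace
      (inclusionInDoubleDual ℝ ↥Z).continuous
  haveI hsep3 : SeparableSpace (StrongDual ℝ ↥Z) := separable_of_dual_sep (X := StrongDual ℝ ↥Z)
  set g : ℕ → StrongDual ℝ ↥Z := denseSeq _ with hgdef
  have hg : DenseRange g := denseRange_denseSeq _
  set z : ℕ → ↥Z := fun n => ⟨f n, hfZ n⟩ with hzdef
  have hzb : ∀ n, ‖z n‖ ≤ C := fun n => hb n
  set v : ℕ → (ℕ → ℝ) := fun n m => g m (z n) with hv
  set B : ℕ → ℝ := fun m => ‖g m‖ * C with hB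
  have hvs : ∀ n, v n ∈ Set.pi Set.univ (fun m => Set.Icc (-(B m)) (B m)) := by
    intro n m _
    have h1 : |g m (z n)| ≤ ‖g m‖ * ‖z n‖ := by
      simpa [Real.norm_eq_abs] using (g m).le_opNorm (z n)
    have h2 : ‖g m‖ * ‖z n‖ ≤ B m :=
      mul_le_mul_of_nonneg_left (hzb n) (norm_nonneg (g m))
    have := abs_le.mp (le_trans h1 h2)
    exact ⟨this.1, this.2⟩
  have hcompact : IsCompact (Set.pi Set.univ fun m => Set.Icc (-(B m)) (B m)) :=
    isCompact_univ_pi fun m => isCompact_Icc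
  obtain ⟨L, _, φ, hφ, hconv⟩ := hcompact.tendsto_subseq hvs
  have hptwise : ∀ m, Tendsto (fun k => g m (z (φ k))) atTop (𝓝 (L m)) := by
    rw [tendsto_pi_nhds] at hconv
    exact fun m => hconv m
  have hcauchy : ∀ h : StrongDual ℝ ↥Z,
      ∃ l, Tendsto (fun k => h (z (φ k))) atTop (𝓝 l) := by
    intro h
    apply cauchySeq_tendsto_of_complete
    rw [Metric.cauchySeq_iff]
    intro ε hε
    obtain ⟨m, hm⟩ := hg.exists_dist_lt h (show (0:ℝ) < ε / 3 / (C + 1) by positivity)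
    have hgm := (hptwise m).cauchySeq
    rw [Metric.cauchySeq_iff] at hgm
    obtain ⟨N, hN⟩ := hgm (ε / 3) (by positivity)
    refine ⟨N, fun p hp q hq => ?_⟩
    have est : ∀ k, dist (h (z (φ k))) (g m (z (φ k))) ≤ ε / 3 := by
      intro k
      rw [Real.dist_eq]
      calc |h (z (φ k)) - g m (z (φ k))| = |(h - g m) (z (φ k))| := by
            simp [ContinuousLinearMap.sub_apply]
        _ ≤ ‖h - g m‖ * ‖z (φ k)‖ := by
            simpa [Real.norm_eq_abs] using (h - g m).le_opNorm (z (φ k))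
        _ ≤ (ε / 3 / (C + 1)) * (C + 1) := by
            apply mul_le_mul ?_ ?_ (norm_nonneg _) (by positivity)
            · exact le_of_lt (lt_of_eq_of_lt (dist_eq_norm h (g m)).symm hm)
            · linarith [hzb (φ k)]
        _ = ε / 3 := by field_simp
    have hmid := hN p hp q hq
    calc dist (h (z (φ p))) (h (z (φ q)))
        ≤ dist (h (z (φ p))) (g m (z (φ p))) + dist (g m (z (φ p))) (g m (z (φ q)))
          + dist (g m (z (φ q))) (h (z (φ q))) := dist_triangle4 _ _ _ _
      _ < ε := by
          have e1 := est p
          have e2 := est q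
          rw [dist_comm (g m (z (φ q)))] at *
          linarith
  choose lim hlim using hcauchy
  have hadd : ∀ h1 h2 : StrongDual ℝ ↥Z, lim (h1 + h2) = lim h1 + lim h2 := by
    intro h1 h2
    refine tendsto_nhds_unique (hlim (h1 + h2)) ?_
    have := (hlim h1).add (hlim h2)
    simpa [ContinuousLinearMap.add_apply] using this
  have hsmul : ∀ (c : ℝ) (h : StrongDual ℝ ↥Z), lim (c • h) = c • lim h := by
    intro c h
    refine tendsto_nhds_unique (hlim (c • h)) ?_
    have := (hlim h).const_mul c
    simpa [ContinuousLinearMap.smul_apply, smul_eq_mul] using this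
  set ℓlin : StrongDual ℝ ↥Z →ₗ[ℝ] ℝ :=
    { toFun := lim, map_add' := hadd, map_smul' := hsmul } with hℓlin
  have hbound : ∀ h : StrongDual ℝ ↥Z, ‖ℓlin h‖ ≤ C * ‖h‖ := by
    intro h
    rw [Real.norm_eq_abs]
    have h1 : Tendsto (fun k => |h (z (φ k))|) atTop (𝓝 |lim h|) := (hlim h).abs
    apply le_of_tendsto h1
    apply Filter.Eventually.of_forall
    intro k
    calc |h (z (φ k))| ≤ ‖h‖ * ‖z (φ k)‖ := by
          simpa [Real.norm_eq_abs] using h.le_opNorm (z (φ k))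
      _ ≤ ‖h‖ * C := mul_le_mul_of_nonneg_left (hzb (φ k)) (norm_nonneg h)
      _ = C * ‖h‖ := mul_comm _ _
  set ℓ : StrongDual ℝ (StrongDual ℝ ↥Z) := ℓlin.mkContinuous C (fun h => hbound h) with hℓ
  obtain ⟨w, hw⟩ := hZrefl ℓ
  refine ⟨φ, hφ, (w : X), ?_⟩
  intro Φ
  set hZf : StrongDual ℝ ↥Z := Φ.comp Z.subtypeL with hhZf
  have h1 : Tendsto (fun k => hZf (z (φ k))) atTop (𝓝 (lim hZf)) := hlim hZf
  have h2 : lim hZf = hZf w := by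
    have h3 : (inclusionInDoubleDual ℝ ↥Z w) hZf = ℓ hZf := by rw [hw]
    have h4 : (inclusionInDoubleDual ℝ ↥Z w) hZf = hZf w := rfl
    have h5 : ℓ hZf = lim hZf := rfl
    rw [← h4, h3, h5]
  rw [h2] at h1
  exact h1

end DDPAux

namespace DDPAux

theorem dual_finiteDimensional {X : Type*} [NormedAddCommGroup X] [NormedSpace ℝ X]
    [FiniteDimensional ℝ X] : FiniteDimensional ℝ (X →L[ℝ] ℝ) :=
  Module.Finite.equiv (LinearMap.toContinuousLinearMap : (X →ₗ[ℝ] ℝ) ≃ₗ[ℝ] (X →L[ℝ] ℝ))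

theorem tendsto_of_weaklyNull_findim {X : Type*} [NormedAddCommGroup X] [NormedSpace ℝ X]
    [FiniteDimensional ℝ X] {h : ℕ → X} (hwn : WeaklyNull h) :
    Tendsto h atTop (𝓝 0) := by
  classical
  set b := Module.finBasis ℝ X with hbdef
  have hco : ∀ i, Tendsto (fun n => b.repr (h n) i • b i) atTop (𝓝 ((0:ℝ) • b i)) := by
    intro i
    apply Tendsto.smul_const
    have hcont : Continuous (b.coord i) := LinearMap.continuous_of_finiteDimensional _
    set f : X →L[ℝ] ℝ := ⟨b.coord i, hcont⟩ with hf
    exact hwn f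
  have hsum : Tendsto (fun n => ∑ i, b.repr (h n) i • b i) atTop
      (𝓝 (∑ i, (0:ℝ) • b i)) := tendsto_finset_sum _ fun i _ => hco i
  have h0 : (∑ i, (0:ℝ) • b i) = 0 := by simp
  rw [h0] at hsum
  have hrepr : (fun n => ∑ i, b.repr (h n) i • b i) = h := by
    funext n
    exact b.sum_repr (h n)
  rwa [hrepr] at hsum

end DDPAux


/-- A reflexive Banach lattice has the (d)-DP property iff it is finite
dimensional. -/
theorem reflexive_dDP_iff_finiteDimensional
    {E : Type*} [NormedAddCommGroup E] [Lattice E] [IsOrderedAddMonoid E] [HasSolidNorm E] [NormedSpace ℝ E] [CompleteSpace E]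
    (hrefl : Function.Surjective (inclusionInDoubleDual ℝ E)) :
    dDPProp E ↔ FiniteDimensional ℝ E := by
  constructor
  · -- (d)-DP + reflexive implies finite dimensional
    intro hdDP
    by_contra hfin
    -- the closed unit ball is disjointly weakly compact
    have hball : DisjointlyWeaklyCompact (closedBall (0 : E) 1) := by
      refine ⟨isBounded_closedBall, ?_⟩
      intro x hx hdisj
      have hb : ∀ n, ‖x n‖ ≤ 1 := by
        intro n
        obtain ⟨c, hc, habs⟩ := hx n
        calc ‖x n‖ ≤ ‖c‖ := norm_le_norm_of_abs_le_abs habs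
          _ ≤ 1 := mem_closedBall_zero_iff.mp hc
      exact DDPAux.weaklyNull_of_disjoint hrefl hdisj hb
    have hDP := hdDP _ hball
    -- hence every weakly null sequence of functionals is norm null
    have hSchur : ∀ h : ℕ → E →L[ℝ] ℝ, WeaklyNull h →
        Tendsto (fun k => ‖h k‖) atTop (𝓝 0) := by
      intro h hwn
      have hUnif := hDP h hwn
      rw [Metric.tendstoUniformlyOn_iff] at hUnif
      rw [Metric.tendsto_nhds]
      intro ε hε
      filter_upwards [hUnif (ε / 2) (by positivity)] with k hk
      have hop : ‖h k‖ ≤ ε / 2 := by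
        apply ContinuousLinearMap.opNorm_le_of_unit_norm (by positivity)
        intro x hx
        have := hk x (by simp [mem_closedBall_zero_iff, hx])
        rw [dist_comm, Real.dist_eq] at this
        simpa [Real.norm_eq_abs] using le_of_lt this
      rw [Real.dist_eq, sub_zero, abs_of_nonneg (norm_nonneg _)]
      calc ‖h k‖ ≤ ε / 2 := hop
        _ < ε := by linarith
    -- the dual is infinite dimensional
    have hfin' : ¬FiniteDimensional ℝ (E →L[ℝ] ℝ) := by
      intro hF
      apply hfin
      haveI := hF
      haveI : FiniteDimensional ℝ ((E →L[ℝ] ℝ) →L[ℝ] ℝ) := DDPAux.dual_finiteDimensional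
      exact FiniteDimensional.of_injective (inclusionInDoubleDualLi ℝ (E := E)).toLinearMap
        (inclusionInDoubleDualLi ℝ (E := E)).injective
    obtain ⟨R, fseq, hR, hfb, hsep⟩ := exists_seq_norm_le_one_le_norm_sub hfin'
    obtain ⟨φ, hφ, F, hconv⟩ := DDPAux.exists_weak_conv_subseq (DDPAux.refl_dual hrefl) hfb
    set gk : ℕ → E →L[ℝ] ℝ := fun k => fseq (φ k) - F with hgk
    have hwn : WeaklyNull gk := by
      intro Φ
      have h1 := hconv Φ
      have h2 : (fun k => Φ (gk k)) = fun k => Φ (fseq (φ k)) - Φ F := by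
        funext k; simp [hgk]
      rw [h2]
      simpa using h1.sub_const (Φ F)
    have hn0 := hSchur gk hwn
    rw [Metric.tendsto_nhds] at hn0
    obtain ⟨N, hN⟩ := Filter.eventually_atTop.mp (hn0 (1/2) (by norm_num))
    have e1 : ‖gk N‖ < 1/2 := by
      have := hN N le_rfl
      rwa [Real.dist_eq, sub_zero, abs_of_nonneg (norm_nonneg _)] at this
    have e2 : ‖gk (N+1)‖ < 1/2 := by
      have := hN (N+1) (by omega)
      rwa [Real.dist_eq, sub_zero, abs_of_nonneg (norm_nonneg _)] at this
    have h1 : ‖fseq (φ N) - fseq (φ (N+1))‖ < 1 := by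
      calc ‖fseq (φ N) - fseq (φ (N+1))‖ = ‖gk N - gk (N+1)‖ := by
            rw [hgk]; simp [sub_sub_sub_cancel_right]
        _ ≤ ‖gk N‖ + ‖gk (N+1)‖ := norm_sub_le _ _
        _ < 1 := by linarith
    exact absurd h1 (not_lt.mpr (hsep (show φ N ≠ φ (N+1) from (hφ (by omega : N < N+1)).ne)))
  · -- finite dimensional implies (d)-DP
    intro hfd
    intro A hA
    obtain ⟨C, hC⟩ := isBounded_iff_forall_norm_le.mp hA.1
    set C' : ℝ := max C 0 with hC'
    have hC0 : 0 ≤ C' := le_max_right _ _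
    intro h hwn
    haveI := hfd
    have hnull : Tendsto h atTop (𝓝 0) := DDPAux.tendsto_of_weaklyNull_findim hwn
    have hnorm : Tendsto (fun n => ‖h n‖) atTop (𝓝 0) := by
      simpa using hnull.norm
    rw [Metric.tendstoUniformlyOn_iff]
    intro ε hε
    filter_upwards [Metric.tendsto_nhds.mp hnorm (ε / (C' + 1)) (by positivity)] with n hn x hxA
    have h1 : ‖h n‖ < ε / (C' + 1) := by
      rwa [Real.dist_eq, sub_zero, abs_of_nonneg (norm_nonneg _)] at hn
    have h2 : ‖x‖ ≤ C' := le_trans (hC x hxA) (le_max_left _ _)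
    have h3 : |h n x| ≤ ‖h n‖ * C' := by
      calc |h n x| ≤ ‖h n‖ * ‖x‖ := by
            simpa [Real.norm_eq_abs] using (h n).le_opNorm x
        _ ≤ ‖h n‖ * C' := mul_le_mul_of_nonneg_left h2 (norm_nonneg _)
    have h4 : dist ((0 : E → ℝ) x) (h n x) = |h n x| := by
      rw [dist_comm, Real.dist_eq]
      simp
    rw [h4]
    have h5 : ‖h n‖ * C' < ε := by
      have ha : ‖h n‖ * C' ≤ ‖h n‖ * (C' + 1) :=
        mul_le_mul_of_nonneg_left (by linarith) (norm_nonneg _)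
      have hbb : ‖h n‖ * (C' + 1) < (ε / (C' + 1)) * (C' + 1) :=
        mul_lt_mul_of_pos_right h1 (by positivity)
      rw [div_mul_cancel₀ _ (by positivity : (C' + 1) ≠ 0)] at hbb
      linarith
    linarith [h3]
end
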